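/- arXiv:0802.1591 — 10 statements merged into one kernel-verified Lean document; each statement's English description precedes it below -/
import Mathlib

section
/- Let X, Y be elements of an associative ring such that X^3 = 0, X Y X^2 = X^2 Y X, and (Y X^2)^2 = X^2 Y^2 X^2. Then X^2 Y^2 X^2 = 0. -/
/-- in an associative ring, `X^3 = 0`, `XYX^2 = X^2YX` and
`(YX^2)^2 = X^2Y^2X^2` imply `X^2Y^2X^2 = 0`. -/
theorem stmt_3 {A : Type*} [Ring A] (X Y : A)
    (h1 : X ^ 3 = 0) (h2 : X * Y * X ^ 2 = X ^ 2 * Y * X)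
    (h3 : (Y * X ^ 2) ^ 2 = X ^ 2 * Y ^ 2 * X ^ 2) :
    X ^ 2 * Y ^ 2 * X ^ 2 = 0 := by
  have hz : X ^ 2 * Y * X ^ 2 = 0 := by
    have e1 : X ^ 2 * Y * X ^ 2 = X * (X * Y * X ^ 2) := by noncomm_ring
    have e2 : X * (X ^ 2 * Y * X) = X ^ 3 * (Y * X) := by noncomm_ring
    rw [e1, h2, e2, h1, zero_mul]
  have e3 : (Y * X ^ 2) ^ 2 = Y * (X ^ 2 * Y * X ^ 2) := by noncomm_ring
  rw [← h3, e3, hz, mul_zero]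
end

section
/- Let L be a subalgebra of a Lie algebra Q over a ring with 1/2, 1/3 invertible, such that Q is a weak algebra of quotients of L, and suppose L is strongly non-degenerate. Then the quadratic annihilator of L in Q is zero: if q ∈ Q satisfies [q,[q,L]] = 0, then q = 0. -/
set_option maxHeartbeats 2000000

/-- if `Q` is a weak algebra of quotients of a strongly non-degenerate
subalgebra `L`, then the quadratic annihilator of `L` in `Q` is zero. -/
theorem stmt_5 {R Q : Type*} [CommRing R] [Invertible (2 : R)] [Invertible (3 : R)]
    [LieRing Q] [LieAlgebra R Q] (L : LieSubalgebra R Q)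
    (hweak : ∀ q : Q, q ≠ 0 → (∃ l ∈ L, ⁅l, q⁆ ≠ 0) ∧ ∀ l ∈ L, ⁅l, q⁆ ∈ L)
    (hL : ∀ x ∈ L, (∀ y ∈ L, ⁅x, ⁅x, y⁆⁆ = 0) → x = 0) :
    ∀ q : Q, (∀ y ∈ L, ⁅q, ⁅q, y⁆⁆ = 0) → q = 0 := by
  intro q hq
  by_contra hq0
  obtain ⟨⟨l₀, hl₀L, hl₀⟩, hmap⟩ := hweak q hq0
  -- scalar helpers
  have half : ∀ x : Q, x + x = 0 → x = 0 := by
    intro x h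
    have h2 : (2:R) • x = 0 := by rw [two_smul]; exact h
    have h3 := invOf_smul_smul (2:R) x
    rw [h2, smul_zero] at h3; exact h3.symm
  have third : ∀ x : Q, x + x + x = 0 → x = 0 := by
    intro x h
    have h2 : (3:R) • x = 0 := by
      have h4 : (3:R) • x = x + x + x := by
        rw [show (3:R) = 2 + 1 by norm_num, add_smul, two_smul, one_smul]
      rw [h4]; exact h
    have h3 := invOf_smul_smul (3:R) x
    rw [h2, smul_zero] at h3; exact h3.symm
  -- ⁅q,·⁆ stays in L
  have amem : ∀ u, u ∈ L → ⁅q, u⁆ ∈ L := by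
    intro u hu
    rw [← lie_skew]
    exact neg_mem (hmap u hu)
  -- L3 : ⁅⁅q,u⁆,⁅q,v⁆⁆ = 0
  have L3 : ∀ u ∈ L, ∀ v ∈ L, ⁅⁅q,u⁆,⁅q,v⁆⁆ = 0 := by
    intro u hu v hv
    have h1 : ⁅q,⁅q,⁅u,v⁆⁆⁆ = 0 := hq _ (L.lie_mem hu hv)
    rw [leibniz_lie q u v, lie_add, leibniz_lie q ⁅q,u⁆ v, leibniz_lie q u ⁅q,v⁆,
        hq u hu, hq v hv, zero_lie, lie_zero, zero_add, add_zero] at h1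
    exact half _ h1
  -- hQC : ⁅q,⁅⁅q,u⁆,x⁆⁆ = 0
  have hQC : ∀ u ∈ L, ∀ x ∈ L, ⁅q,⁅⁅q,u⁆,x⁆⁆ = 0 := by
    intro u hu x hx
    rw [leibniz_lie q ⁅q,u⁆ x, hq u hu, L3 u hu x hx, zero_lie, add_zero]
  -- hSa : ⁅s,⁅q,x⁆⁆ = ⁅c,⁅u,⁅q,x⁆⁆⁆
  have hSa : ∀ u ∈ L, ∀ x ∈ L, ⁅⁅⁅q,u⁆,u⁆,⁅q,x⁆⁆ = ⁅⁅q,u⁆,⁅u,⁅q,x⁆⁆⁆ := by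
    intro u hu x hx
    rw [lie_lie, L3 u hu x hx, lie_zero, sub_zero]
  -- hCC : ⁅c,⁅c,x⁆⁆ = -⁅s,⁅q,x⁆⁆
  have hCC : ∀ u ∈ L, ∀ x ∈ L, ⁅⁅q,u⁆,⁅⁅q,u⁆,x⁆⁆ = -⁅⁅⁅q,u⁆,u⁆,⁅q,x⁆⁆ := by
    intro u hu x hx
    have h1 : ⁅⁅q,u⁆,⁅q,⁅u,x⁆⁆⁆ = 0 := L3 u hu ⁅u,x⁆ (L.lie_mem hu hx)
    rw [leibniz_lie q u x, lie_add, ← hSa u hu x hx] at h1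
    exact eq_neg_of_add_eq_zero_left h1
  -- hC3 : C³ = 0
  have hC3 : ∀ u ∈ L, ∀ x ∈ L, ⁅⁅q,u⁆,⁅⁅q,u⁆,⁅⁅q,u⁆,x⁆⁆⁆ = 0 := by
    intro u hu x hx
    rw [hCC u hu ⁅⁅q,u⁆,x⁆ (L.lie_mem (amem u hu) hx), hQC u hu x hx, lie_zero, neg_zero]
  -- hR1 : C²UCz = CUC²z
  have hR1 : ∀ u ∈ L, ∀ z ∈ L,
      ⁅⁅q,u⁆,⁅⁅q,u⁆,⁅u,⁅⁅q,u⁆,z⁆⁆⁆⁆ = ⁅⁅q,u⁆,⁅u,⁅⁅q,u⁆,⁅⁅q,u⁆,z⁆⁆⁆⁆ := by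
    intro u hu z hz
    have h4 : ⁅⁅⁅q,u⁆,⁅⁅q,u⁆,⁅⁅q,u⁆,u⁆⁆⁆, z⁆ =
        (⁅⁅q,u⁆,⁅u,⁅⁅q,u⁆,⁅⁅q,u⁆,z⁆⁆⁆⁆ - ⁅⁅q,u⁆,⁅⁅q,u⁆,⁅u,⁅⁅q,u⁆,z⁆⁆⁆⁆)
        + (⁅⁅q,u⁆,⁅u,⁅⁅q,u⁆,⁅⁅q,u⁆,z⁆⁆⁆⁆ - ⁅⁅q,u⁆,⁅⁅q,u⁆,⁅u,⁅⁅q,u⁆,z⁆⁆⁆⁆)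
        + (⁅⁅q,u⁆,⁅u,⁅⁅q,u⁆,⁅⁅q,u⁆,z⁆⁆⁆⁆ - ⁅⁅q,u⁆,⁅⁅q,u⁆,⁅u,⁅⁅q,u⁆,z⁆⁆⁆⁆)
        + ⁅⁅q,u⁆,⁅⁅q,u⁆,⁅⁅q,u⁆,⁅u,z⁆⁆⁆⁆ - ⁅u,⁅⁅q,u⁆,⁅⁅q,u⁆,⁅⁅q,u⁆,z⁆⁆⁆⁆ := by
      simp only [lie_lie, lie_sub, sub_lie, lie_add, add_lie, lie_neg, neg_lie]
      abel
    have hz3 : ⁅⁅⁅q,u⁆,⁅⁅q,u⁆,⁅⁅q,u⁆,u⁆⁆⁆, z⁆ = 0 := by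
      rw [hC3 u hu u hu, zero_lie]
    rw [hz3, hC3 u hu ⁅u,z⁆ (L.lie_mem hu hz), hC3 u hu z hz, lie_zero, add_zero, sub_zero] at h4
    have h5 := third _ h4.symm
    have h6 := sub_eq_zero.mp h5
    exact h6.symm
  -- hCCUC : C²UCx = ⁅s,⁅s,⁅q,x⁆⁆⁆
  have hCCUC : ∀ u ∈ L, ∀ x ∈ L,
      ⁅⁅q,u⁆,⁅⁅q,u⁆,⁅u,⁅⁅q,u⁆,x⁆⁆⁆⁆ = ⁅⁅⁅q,u⁆,u⁆,⁅⁅⁅q,u⁆,u⁆,⁅q,x⁆⁆⁆ := by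
    intro u hu x hx
    have hm1 : ⁅u,⁅⁅q,u⁆,x⁆⁆ ∈ L := L.lie_mem hu (L.lie_mem (amem u hu) hx)
    rw [hCC u hu _ hm1]
    have h2 : ⁅q,⁅u,⁅⁅q,u⁆,x⁆⁆⁆ = -⁅⁅⁅q,u⁆,u⁆,⁅q,x⁆⁆ := by
      rw [leibniz_lie q u ⁅⁅q,u⁆,x⁆, hQC u hu x hx, lie_zero, add_zero, hCC u hu x hx]
    rw [h2, lie_neg, neg_neg]
  -- hT2 : ⁅s,⁅s,⁅q,x⁆⁆⁆ = ⁅c,⁅u,⁅s,⁅q,x⁆⁆⁆⁆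
  have hT2 : ∀ u ∈ L, ∀ x ∈ L,
      ⁅⁅⁅q,u⁆,u⁆,⁅⁅⁅q,u⁆,u⁆,⁅q,x⁆⁆⁆ = ⁅⁅q,u⁆,⁅u,⁅⁅⁅q,u⁆,u⁆,⁅q,x⁆⁆⁆⁆ := by
    intro u hu x hx
    have hy : ⁅u,⁅q,x⁆⁆ ∈ L := L.lie_mem hu (amem x hx)
    have h5 : ⁅q,⁅u,⁅q,x⁆⁆⁆ = 0 := by
      rw [leibniz_lie q u ⁅q,x⁆, L3 u hu x hx, hq x hx, lie_zero, zero_add]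
    have h6 : ⁅⁅q,u⁆,⁅⁅q,u⁆,⁅u,⁅q,x⁆⁆⁆⁆ = 0 := by
      rw [hCC u hu ⁅u,⁅q,x⁆⁆ hy, h5, lie_zero, neg_zero]
    rw [hSa u hu x hx, lie_lie, h6, lie_zero, sub_zero]
  -- hS2 and hCUSa
  have hT1 : ∀ u ∈ L, ∀ x ∈ L,
      ⁅⁅⁅q,u⁆,u⁆,⁅⁅⁅q,u⁆,u⁆,⁅q,x⁆⁆⁆ = -⁅⁅q,u⁆,⁅u,⁅⁅⁅q,u⁆,u⁆,⁅q,x⁆⁆⁆⁆ := by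
    intro u hu x hx
    have h := hR1 u hu x hx
    rw [hCCUC u hu x hx, hCC u hu x hx, lie_neg, lie_neg] at h
    exact h
  have hCUSa : ∀ u ∈ L, ∀ x ∈ L, ⁅⁅q,u⁆,⁅u,⁅⁅⁅q,u⁆,u⁆,⁅q,x⁆⁆⁆⁆ = 0 := by
    intro u hu x hx
    have hBB := (hT2 u hu x hx).symm.trans (hT1 u hu x hx)
    apply half
    nth_rewrite 1 [hBB]
    exact neg_add_cancel _
  have hS2 : ∀ u ∈ L, ∀ x ∈ L,
      ⁅⁅⁅q,u⁆,u⁆,⁅⁅⁅q,u⁆,u⁆,⁅q,x⁆⁆⁆ = 0 := by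
    intro u hu x hx
    exact (hT2 u hu x hx).trans (hCUSa u hu x hx)
  have hCCUC0 : ∀ u ∈ L, ∀ x ∈ L,
      ⁅⁅q,u⁆,⁅⁅q,u⁆,⁅u,⁅⁅q,u⁆,x⁆⁆⁆⁆ = 0 := by
    intro u hu x hx
    exact (hCCUC u hu x hx).trans (hS2 u hu x hx)
  have hCUCC : ∀ u ∈ L, ∀ x ∈ L,
      ⁅⁅q,u⁆,⁅u,⁅⁅q,u⁆,⁅⁅q,u⁆,x⁆⁆⁆⁆ = 0 := by
    intro u hu x hx
    rw [hCC u hu x hx, lie_neg, lie_neg, hCUSa u hu x hx, neg_zero]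
  -- adE : expansion of ad of e := ⁅⁅⁅q,u⁆,u⁆,⁅q,u⁆⁆
  have adE : ∀ (u x : Q), ⁅⁅⁅⁅q,u⁆,u⁆,⁅q,u⁆⁆,x⁆ =
      ⁅⁅q,u⁆,⁅u,⁅⁅q,u⁆,x⁆⁆⁆ + ⁅⁅q,u⁆,⁅u,⁅⁅q,u⁆,x⁆⁆⁆
      - ⁅u,⁅⁅q,u⁆,⁅⁅q,u⁆,x⁆⁆⁆ - ⁅⁅q,u⁆,⁅⁅q,u⁆,⁅u,x⁆⁆⁆ := by
    intro u x
    simp only [lie_lie, lie_sub, sub_lie, lie_add, add_lie, lie_neg, neg_lie]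
    abel
  -- keyZ : e(u) = 0
  have keyZ : ∀ u ∈ L, ⁅⁅⁅q,u⁆,u⁆,⁅q,u⁆⁆ = 0 := by
    intro u hu
    have hc : ⁅q,u⁆ ∈ L := amem u hu
    apply hL _ (L.lie_mem (L.lie_mem hc hu) hc)
    intro m hm
    have hcm : ⁅⁅q,u⁆,m⁆ ∈ L := L.lie_mem hc hm
    have hum : ⁅u,m⁆ ∈ L := L.lie_mem hu hm
    -- g1 : ⁅c,⁅e,m⁆⁆ = 0
    have g1 : ⁅⁅q,u⁆, ⁅⁅⁅⁅q,u⁆,u⁆,⁅q,u⁆⁆,m⁆⁆ = 0 := by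
      rw [adE u m]
      simp only [lie_add, lie_sub]
      rw [hCCUC0 u hu m hm, hCUCC u hu m hm, hC3 u hu ⁅u,m⁆ hum]
      simp
    -- zero lemmas for g4
    have hqF : ⁅q, ⁅u,⁅⁅q,u⁆,⁅⁅q,u⁆,m⁆⁆⁆⁆ = 0 := by
      rw [leibniz_lie q u ⁅⁅q,u⁆,⁅⁅q,u⁆,m⁆⁆, hC3 u hu m hm, hQC u hu ⁅⁅q,u⁆,m⁆ hcm,
          lie_zero, add_zero]
    have hqX0 : ⁅q, ⁅u,⁅u,⁅⁅q,u⁆,⁅⁅q,u⁆,m⁆⁆⁆⁆⁆ = 0 := by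
      rw [leibniz_lie q u ⁅u,⁅⁅q,u⁆,⁅⁅q,u⁆,m⁆⁆⁆, hCUCC u hu m hm, hqF, lie_zero, add_zero]
    have hX0mem : ⁅u,⁅u,⁅⁅q,u⁆,⁅⁅q,u⁆,m⁆⁆⁆⁆ ∈ L :=
      L.lie_mem hu (L.lie_mem hu (L.lie_mem hc (L.lie_mem hc hm)))
    have hW0 : ⁅⁅q,u⁆,⁅⁅q,u⁆,⁅u,⁅u,⁅⁅q,u⁆,⁅⁅q,u⁆,m⁆⁆⁆⁆⁆⁆ = 0 := by
      rw [hCC u hu _ hX0mem, hqX0, lie_zero, neg_zero]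
    -- g4 : ⁅c,⁅c,⁅u,⁅e,m⁆⁆⁆⁆ = 0
    have g4 : ⁅⁅q,u⁆,⁅⁅q,u⁆,⁅u,⁅⁅⁅⁅q,u⁆,u⁆,⁅q,u⁆⁆,m⁆⁆⁆⁆ = 0 := by
      rw [adE u m]
      simp only [lie_add, lie_sub]
      rw [hR1 u hu ⁅u,⁅⁅q,u⁆,m⁆⁆ (L.lie_mem hu hcm),
          hR1 u hu ⁅⁅q,u⁆,⁅u,m⁆⁆ (L.lie_mem hc hum),
          hCCUC0 u hu m hm, hC3 u hu ⁅u,m⁆ hum, hW0]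
      simp
    -- assemble
    rw [adE u ⁅⁅⁅⁅q,u⁆,u⁆,⁅q,u⁆⁆,m⁆, g1, g4]
    simp
  -- polarization : tier-1
  have tier1 : ∀ u ∈ L, ∀ m ∈ L, ⁅⁅⁅q,u⁆,u⁆,⁅q,m⁆⁆ = 0 := by
    intro u hu m hm
    have hw₁ : ⁅⁅⁅q,u+m⁆,u+m⁆,⁅q,u+m⁆⁆ =
        ⁅⁅⁅q,u⁆,u⁆,⁅q,u⁆⁆ + ⁅⁅⁅q,u⁆,u⁆,⁅q,m⁆⁆ + ⁅⁅⁅q,u⁆,m⁆,⁅q,u⁆⁆ + ⁅⁅⁅q,m⁆,u⁆,⁅q,u⁆⁆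
        + ⁅⁅⁅q,u⁆,m⁆,⁅q,m⁆⁆ + ⁅⁅⁅q,m⁆,u⁆,⁅q,m⁆⁆ + ⁅⁅⁅q,m⁆,m⁆,⁅q,u⁆⁆
        + ⁅⁅⁅q,m⁆,m⁆,⁅q,m⁆⁆ := by
      simp only [lie_add, add_lie]
      abel
    have hw₂ : ⁅⁅⁅q,u-m⁆,u-m⁆,⁅q,u-m⁆⁆ =
        ⁅⁅⁅q,u⁆,u⁆,⁅q,u⁆⁆ - ⁅⁅⁅q,u⁆,u⁆,⁅q,m⁆⁆ - ⁅⁅⁅q,u⁆,m⁆,⁅q,u⁆⁆ - ⁅⁅⁅q,m⁆,u⁆,⁅q,u⁆⁆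
        + ⁅⁅⁅q,u⁆,m⁆,⁅q,m⁆⁆ + ⁅⁅⁅q,m⁆,u⁆,⁅q,m⁆⁆ + ⁅⁅⁅q,m⁆,m⁆,⁅q,u⁆⁆
        - ⁅⁅⁅q,m⁆,m⁆,⁅q,m⁆⁆ := by
      simp only [lie_sub, sub_lie]
      abel
    have h₁ : ⁅⁅⁅q,u⁆,u⁆,⁅q,u⁆⁆ + ⁅⁅⁅q,u⁆,u⁆,⁅q,m⁆⁆ + ⁅⁅⁅q,u⁆,m⁆,⁅q,u⁆⁆ + ⁅⁅⁅q,m⁆,u⁆,⁅q,u⁆⁆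
        + ⁅⁅⁅q,u⁆,m⁆,⁅q,m⁆⁆ + ⁅⁅⁅q,m⁆,u⁆,⁅q,m⁆⁆ + ⁅⁅⁅q,m⁆,m⁆,⁅q,u⁆⁆
        + ⁅⁅⁅q,m⁆,m⁆,⁅q,m⁆⁆ = 0 := by
      rw [← hw₁]; exact keyZ (u+m) (add_mem hu hm)
    have h₂ : ⁅⁅⁅q,u⁆,u⁆,⁅q,u⁆⁆ - ⁅⁅⁅q,u⁆,u⁆,⁅q,m⁆⁆ - ⁅⁅⁅q,u⁆,m⁆,⁅q,u⁆⁆ - ⁅⁅⁅q,m⁆,u⁆,⁅q,u⁆⁆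
        + ⁅⁅⁅q,u⁆,m⁆,⁅q,m⁆⁆ + ⁅⁅⁅q,m⁆,u⁆,⁅q,m⁆⁆ + ⁅⁅⁅q,m⁆,m⁆,⁅q,u⁆⁆
        - ⁅⁅⁅q,m⁆,m⁆,⁅q,m⁆⁆ = 0 := by
      rw [← hw₂]; exact keyZ (u-m) (sub_mem hu hm)
    have h₃ : ⁅⁅⁅q,m⁆,m⁆,⁅q,m⁆⁆ = 0 := keyZ m hm
    have key3 : (⁅⁅⁅q,u⁆,u⁆,⁅q,m⁆⁆ + ⁅⁅⁅q,u⁆,m⁆,⁅q,u⁆⁆ + ⁅⁅⁅q,m⁆,u⁆,⁅q,u⁆⁆)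
        + (⁅⁅⁅q,u⁆,u⁆,⁅q,m⁆⁆ + ⁅⁅⁅q,u⁆,m⁆,⁅q,u⁆⁆ + ⁅⁅⁅q,m⁆,u⁆,⁅q,u⁆⁆) =
        (⁅⁅⁅q,u⁆,u⁆,⁅q,u⁆⁆ + ⁅⁅⁅q,u⁆,u⁆,⁅q,m⁆⁆ + ⁅⁅⁅q,u⁆,m⁆,⁅q,u⁆⁆ + ⁅⁅⁅q,m⁆,u⁆,⁅q,u⁆⁆
        + ⁅⁅⁅q,u⁆,m⁆,⁅q,m⁆⁆ + ⁅⁅⁅q,m⁆,u⁆,⁅q,m⁆⁆ + ⁅⁅⁅q,m⁆,m⁆,⁅q,u⁆⁆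
        + ⁅⁅⁅q,m⁆,m⁆,⁅q,m⁆⁆)
        - (⁅⁅⁅q,u⁆,u⁆,⁅q,u⁆⁆ - ⁅⁅⁅q,u⁆,u⁆,⁅q,m⁆⁆ - ⁅⁅⁅q,u⁆,m⁆,⁅q,u⁆⁆ - ⁅⁅⁅q,m⁆,u⁆,⁅q,u⁆⁆
        + ⁅⁅⁅q,u⁆,m⁆,⁅q,m⁆⁆ + ⁅⁅⁅q,m⁆,u⁆,⁅q,m⁆⁆ + ⁅⁅⁅q,m⁆,m⁆,⁅q,u⁆⁆
        - ⁅⁅⁅q,m⁆,m⁆,⁅q,m⁆⁆)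
        - (⁅⁅⁅q,m⁆,m⁆,⁅q,m⁆⁆ + ⁅⁅⁅q,m⁆,m⁆,⁅q,m⁆⁆) := by abel
    rw [h₁, h₂, h₃] at key3
    simp only [zero_sub, sub_zero, zero_add, add_zero, neg_zero] at key3
    have hX := half _ key3
    -- hX : ⁅⁅⁅q,u⁆,u⁆,⁅q,m⁆⁆ + ⁅⁅⁅q,u⁆,m⁆,⁅q,u⁆⁆ + ⁅⁅⁅q,m⁆,u⁆,⁅q,u⁆⁆ = 0
    have r1 : ⁅⁅⁅q,u⁆,m⁆,⁅q,u⁆⁆ = ⁅⁅⁅q,u⁆,u⁆,⁅q,m⁆⁆ := by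
      rw [← lie_skew (x := ⁅⁅q,u⁆,m⁆) (y := ⁅q,u⁆), hCC u hu m hm, neg_neg]
    have r2 : ⁅⁅⁅q,m⁆,u⁆,⁅q,u⁆⁆ = ⁅⁅⁅q,u⁆,u⁆,⁅q,m⁆⁆ := by
      rw [← lie_skew (x := ⁅⁅q,m⁆,u⁆) (y := ⁅q,u⁆), ← lie_skew (x := ⁅q,m⁆) (y := u),
          lie_neg, neg_neg, ← hSa u hu m hm]
    rw [r1, r2] at hX
    exact third _ hX
  -- conclude : ⁅q,u⁆ = 0 for all u ∈ L
  have A0 : ∀ u ∈ L, ⁅q,u⁆ = 0 := by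
    intro u hu
    apply hL _ (amem u hu)
    intro m hm
    rw [hCC u hu m hm, tier1 u hu m hm, neg_zero]
  have : ⁅l₀, q⁆ = 0 := by
    rw [← lie_skew, A0 l₀ hl₀L, neg_zero]
  exact hl₀ this
end

section
/- Let I be a strongly non-degenerate ideal of a Lie algebra L over a ring with 1/2, 1/3 invertible, and suppose Ann_L(I) = 0. Then L is strongly non-degenerate. -/
set_option maxRecDepth 8000
set_option maxHeartbeats 2000000

private lemma aux_cancel {R M : Type*} [CommRing R] [AddCommGroup M] [Module R M]
    (r : R) (hr : Invertible r) {v : M} (h : r • v = 0) : v = 0 := by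
  have h2 := congrArg (fun w => hr.invOf • w) h
  simpa [smul_smul] using h2

private lemma sandwich_sq_zero {R S : Type*} [CommRing R] [Ring S] [Algebra R S]
    (h2 : Invertible (2 : R)) (h3 : Invertible (3 : R)) (A B G : S)
    (r1 : A * A = 0) (hABA : A * B * A = 0)
    (hAGA : A * G * A = 0) (hG : G = ⁅B, ⁅B, ⁅B, ⁅A, B⁆⁆⁆⁆) :
    ⁅⁅A, B⁆, ⁅⁅A, B⁆, B⁆⁆ * ⁅⁅A, B⁆, ⁅⁅A, B⁆, B⁆⁆ = 0 := by
  subst hG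
  have i6 : Invertible (6 : R) := by
    have h23 : (6 : R) = 2 * 3 := by norm_num
    rw [h23]; exact invertibleMul 2 3
  have hTT : A*B*B*A*B*B*A*B*B*A = 0 := by
    have I1 : 6 * (A*B*B*A*B*B*A*B*B*A) =
        -(A * ⁅B, ⁅B, ⁅B, ⁅A, B⁆⁆⁆⁆ * A * (B*B*A))
        - (A*A)*(B*B*B*B*A*B*B*A)
        + 4*((A*B*A)*(B*B*B*A*B*B*A))
        + 4*((A*B*B*B)*(A*B*A)*(B*B*A))
        - ((A*B*B*B*B)*(A*A)*(B*B*A)) := by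
      simp only [Ring.lie_def]
      noncomm_ring
    have I1' : 6 * (A*B*B*A*B*B*A*B*B*A) = 0 := by
      rw [I1]
      simp only [hAGA, r1, hABA, zero_mul, mul_zero, neg_zero, add_zero, zero_add,
        sub_zero, zero_sub, sub_self]
    have hs : (6 : R) • (A*B*B*A*B*B*A*B*B*A) = 0 := by
      rw [Algebra.smul_def, map_ofNat]; exact I1'
    exact aux_cancel (6 : R) i6 hs
  have I2 : ⁅⁅A, B⁆, ⁅⁅A, B⁆, B⁆⁆ * ⁅⁅A, B⁆, ⁅⁅A, B⁆, B⁆⁆ =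
      9*(A*B*B*A*B*B*A*B*B*A)
      + (A*B*A)*B*B*A*B*A*B*B
      - 3*(A*B*A)*B*B*A*B*B*A*B
      + 2*(A*B*A)*B*B*A*B*B*B*A
      - A*B*A*B*B*B*(A*A)*B*B
      + 4*(A*B*A)*B*B*B*A*B*A*B
      - 3*(A*B*A)*B*B*B*A*B*B*A
      - A*B*A*B*B*B*B*(A*A)*B
      + (A*B*A)*B*B*B*B*A*B*A
      - 3*A*B*B*(A*B*A)*B*A*B*B
      + 9*A*B*B*(A*B*A)*B*B*A*B
      - 6*A*B*B*(A*B*A)*B*B*B*A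
      + 3*A*B*B*A*B*B*(A*A)*B*B
      - 12*A*B*B*A*B*B*(A*B*A)*B
      + 3*A*B*B*A*B*B*B*(A*A)*B
      - 3*A*B*B*A*B*B*B*(A*B*A)
      + 2*A*B*B*B*(A*A)*B*A*B*B
      - 6*A*B*B*B*(A*A)*B*B*A*B
      + 4*A*B*B*B*(A*A)*B*B*B*A
      - 2*A*B*B*B*A*B*(A*A)*B*B
      + 8*A*B*B*B*(A*B*A)*B*A*B
      - 6*A*B*B*B*(A*B*A)*B*B*A
      - 2*A*B*B*B*A*B*B*(A*A)*B
      + 2*A*B*B*B*A*B*B*(A*B*A)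
      - B*(A*A)*B*B*A*B*A*B*B
      + 3*B*(A*A)*B*B*A*B*B*A*B
      - 2*B*(A*A)*B*B*A*B*B*B*A
      + B*(A*A)*B*B*B*A*A*B*B
      - 4*B*(A*A)*B*B*B*A*B*A*B
      + 3*B*(A*A)*B*B*B*A*B*B*A
      + B*(A*A)*B*B*B*B*A*A*B
      - B*(A*A)*B*B*B*B*A*B*A
      + 4*B*(A*B*A)*B*A*B*A*B*B
      - 12*B*(A*B*A)*B*A*B*B*A*B
      + 8*B*(A*B*A)*B*A*B*B*B*A
      - 4*B*A*B*A*B*B*(A*A)*B*B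
      + 16*B*(A*B*A)*B*B*A*B*A*B
      - 12*B*(A*B*A)*B*B*A*B*B*A
      - 4*B*A*B*A*B*B*B*(A*A)*B
      + 4*B*(A*B*A)*B*B*B*A*B*A
      - 3*B*A*B*B*(A*A)*B*A*B*B
      + 9*B*A*B*B*(A*A)*B*B*A*B
      - 6*B*A*B*B*(A*A)*B*B*B*A
      + 3*B*A*B*B*A*B*(A*A)*B*B
      - 12*B*A*B*B*(A*B*A)*B*A*B
      + 9*B*A*B*B*(A*B*A)*B*B*A
      + 3*B*A*B*B*A*B*B*(A*A)*B
      - 3*B*A*B*B*A*B*B*(A*B*A)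
      - B*B*(A*A)*B*A*B*A*B*B
      + 3*B*B*(A*A)*B*A*B*B*A*B
      - 2*B*B*(A*A)*B*A*B*B*B*A
      + B*B*(A*A)*B*B*A*A*B*B
      - 4*B*B*(A*A)*B*B*A*B*A*B
      + 3*B*B*(A*A)*B*B*A*B*B*A
      + B*B*(A*A)*B*B*B*A*A*B
      - B*B*(A*A)*B*B*B*A*B*A
      + B*B*A*B*(A*A)*B*A*B*B
      - 3*B*B*A*B*(A*A)*B*B*A*B
      + 2*B*B*A*B*(A*A)*B*B*B*A
      - B*B*A*B*A*B*(A*A)*B*B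
      + 4*B*B*(A*B*A)*B*A*B*A*B
      - 3*B*B*(A*B*A)*B*A*B*B*A
      - B*B*A*B*A*B*B*(A*A)*B
      + B*B*(A*B*A)*B*B*A*B*A := by
    simp only [Ring.lie_def]
    noncomm_ring
  rw [I2]
  simp only [hTT, r1, hABA, zero_mul, mul_zero, neg_zero, add_zero, zero_add,
    sub_zero, zero_sub, sub_self, neg_eq_zero]

/-- if `I` is a strongly non-degenerate ideal of `L` with
`Ann_L(I) = 0`, then `L` is strongly non-degenerate. -/
theorem stmt_7 {R L : Type*} [CommRing R] [Invertible (2 : R)] [Invertible (3 : R)]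
    [LieRing L] [LieAlgebra R L] (I : LieIdeal R L)
    (hI : ∀ y ∈ I, (∀ z ∈ I, ⁅y, ⁅y, z⁆⁆ = 0) → y = 0)
    (hann : ∀ a : L, (∀ b ∈ I, ⁅a, b⁆ = 0) → a = 0) :
    ∀ x : L, (∀ y : L, ⁅x, ⁅x, y⁆⁆ = 0) → x = 0 := by
  intro x hx
  -- step 0 : sandwich identities
  have h2 : ∀ w y : L, ⁅x, ⁅w, ⁅x, y⁆⁆⁆ = 0 := by
    intro w y
    have k1 : ⁅⁅x, ⁅x, w⁆⁆, y⁆ = (0 : L) := by rw [hx w, zero_lie]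
    rw [lie_lie] at k1
    have k2 : ⁅x, ⁅⁅x, w⁆, y⁆⁆ = - ⁅x, ⁅w, ⁅x, y⁆⁆⁆ := by
      rw [show ⁅⁅x,w⁆,y⁆ = ⁅x,⁅w,y⁆⁆ - ⁅w,⁅x,y⁆⁆ from lie_lie x w y, lie_sub, hx, zero_sub]
    have k3 : ⁅⁅x, w⁆, ⁅x, y⁆⁆ = ⁅x, ⁅w, ⁅x, y⁆⁆⁆ := by
      rw [lie_lie, hx y, lie_zero, sub_zero]
    rw [k2, k3] at k1
    have k4 : ⁅x, ⁅w, ⁅x, y⁆⁆⁆ + ⁅x, ⁅w, ⁅x, y⁆⁆⁆ = 0 := by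
      rw [sub_eq_add_neg, ← neg_add] at k1
      exact neg_eq_zero.mp k1
    have k5 : (2 : R) • ⁅x, ⁅w, ⁅x, y⁆⁆⁆ = 0 := by rw [two_smul]; exact k4
    exact aux_cancel (2 : R) ‹Invertible (2:R)› k5
  have h3 : ∀ p q : L, ⁅⁅x, p⁆, ⁅x, q⁆⁆ = 0 := by
    intro p q
    rw [lie_lie, h2, hx q, lie_zero, sub_zero]
  -- operator facts
  have r1 : LieAlgebra.ad R L x * LieAlgebra.ad R L x = 0 := by
    ext v
    simp only [Module.End.mul_apply, LieAlgebra.ad_apply, LinearMap.zero_apply, hx]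
  have rW : ∀ w : L, LieAlgebra.ad R L x * LieAlgebra.ad R L w * LieAlgebra.ad R L x = 0 := by
    intro w; ext v
    simp only [Module.End.mul_apply, LieAlgebra.ad_apply, LinearMap.zero_apply, h2]
  -- step 1 : for every c ∈ I, the element ⁅⁅x,c⁆,⁅⁅x,c⁆,c⁆⁆ is zero
  have hyc : ∀ c ∈ I, ⁅⁅x, c⁆, ⁅⁅x, c⁆, c⁆⁆ = (0 : L) := by
    intro c hc
    have key := sandwich_sq_zero ‹Invertible (2:R)› ‹Invertible (3:R)›
      (LieAlgebra.ad R L x) (LieAlgebra.ad R L c)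
      (LieAlgebra.ad R L ⁅c, ⁅c, ⁅c, ⁅x, c⁆⁆⁆⁆) r1 (rW c) (rW _)
      (by simp only [LieHom.map_lie])
    have hady : LieAlgebra.ad R L ⁅⁅x, c⁆, ⁅⁅x, c⁆, c⁆⁆ =
        ⁅⁅LieAlgebra.ad R L x, LieAlgebra.ad R L c⁆,
         ⁅⁅LieAlgebra.ad R L x, LieAlgebra.ad R L c⁆, LieAlgebra.ad R L c⁆⁆ := by
      simp only [LieHom.map_lie]
    apply hI _ (LieSubmodule.lie_mem I (LieSubmodule.lie_mem I hc))
    intro z _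
    have e : ⁅⁅⁅x, c⁆, ⁅⁅x, c⁆, c⁆⁆, ⁅⁅⁅x, c⁆, ⁅⁅x, c⁆, c⁆⁆, z⁆⁆ =
        (LieAlgebra.ad R L ⁅⁅x, c⁆, ⁅⁅x, c⁆, c⁆⁆ *
         LieAlgebra.ad R L ⁅⁅x, c⁆, ⁅⁅x, c⁆, c⁆⁆) z := by
      rw [Module.End.mul_apply, LieAlgebra.ad_apply, LieAlgebra.ad_apply]
    rw [e, hady, key]
    exact LinearMap.zero_apply z
  -- step 2 : polarization
  have hu2 : ∀ b ∈ I, ∀ z ∈ I, ⁅⁅x, b⁆, ⁅⁅x, b⁆, z⁆⁆ = (0 : L) := by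
    intro b hb z hz
    have hbz := hyc (b + z) (I.add_mem hb hz)
    have hbz' := hyc (b - z) (I.sub_mem hb hz)
    have hb0 := hyc b hb
    have hz0 := hyc z hz
    have E1 : ⁅⁅x, b + z⁆, ⁅⁅x, b + z⁆, b + z⁆⁆ =
        ⁅⁅x,b⁆,⁅⁅x,b⁆,b⁆⁆ + ⁅⁅x,b⁆,⁅⁅x,b⁆,z⁆⁆ + ⁅⁅x,b⁆,⁅⁅x,z⁆,b⁆⁆ + ⁅⁅x,b⁆,⁅⁅x,z⁆,z⁆⁆
        + ⁅⁅x,z⁆,⁅⁅x,b⁆,b⁆⁆ + ⁅⁅x,z⁆,⁅⁅x,b⁆,z⁆⁆ + ⁅⁅x,z⁆,⁅⁅x,z⁆,b⁆⁆ + ⁅⁅x,z⁆,⁅⁅x,z⁆,z⁆⁆ := by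
      simp only [lie_add, add_lie]
      abel
    have E2 : ⁅⁅x, b - z⁆, ⁅⁅x, b - z⁆, b - z⁆⁆ =
        ⁅⁅x,b⁆,⁅⁅x,b⁆,b⁆⁆ - ⁅⁅x,b⁆,⁅⁅x,b⁆,z⁆⁆ - ⁅⁅x,b⁆,⁅⁅x,z⁆,b⁆⁆ + ⁅⁅x,b⁆,⁅⁅x,z⁆,z⁆⁆
        - ⁅⁅x,z⁆,⁅⁅x,b⁆,b⁆⁆ + ⁅⁅x,z⁆,⁅⁅x,b⁆,z⁆⁆ + ⁅⁅x,z⁆,⁅⁅x,z⁆,b⁆⁆ - ⁅⁅x,z⁆,⁅⁅x,z⁆,z⁆⁆ := by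
      simp only [lie_sub, sub_lie]
      abel
    rw [E1] at hbz
    rw [E2] at hbz'
    have hXX : (⁅⁅x,b⁆,⁅⁅x,b⁆,z⁆⁆ + ⁅⁅x,b⁆,⁅⁅x,z⁆,b⁆⁆ + ⁅⁅x,z⁆,⁅⁅x,b⁆,b⁆⁆)
        + (⁅⁅x,b⁆,⁅⁅x,b⁆,z⁆⁆ + ⁅⁅x,b⁆,⁅⁅x,z⁆,b⁆⁆ + ⁅⁅x,z⁆,⁅⁅x,b⁆,b⁆⁆) = 0 := by
      have hh : (⁅⁅x,b⁆,⁅⁅x,b⁆,b⁆⁆ + ⁅⁅x,b⁆,⁅⁅x,b⁆,z⁆⁆ + ⁅⁅x,b⁆,⁅⁅x,z⁆,b⁆⁆ + ⁅⁅x,b⁆,⁅⁅x,z⁆,z⁆⁆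
          + ⁅⁅x,z⁆,⁅⁅x,b⁆,b⁆⁆ + ⁅⁅x,z⁆,⁅⁅x,b⁆,z⁆⁆ + ⁅⁅x,z⁆,⁅⁅x,z⁆,b⁆⁆ + ⁅⁅x,z⁆,⁅⁅x,z⁆,z⁆⁆)
          - (⁅⁅x,b⁆,⁅⁅x,b⁆,b⁆⁆ - ⁅⁅x,b⁆,⁅⁅x,b⁆,z⁆⁆ - ⁅⁅x,b⁆,⁅⁅x,z⁆,b⁆⁆ + ⁅⁅x,b⁆,⁅⁅x,z⁆,z⁆⁆
          - ⁅⁅x,z⁆,⁅⁅x,b⁆,b⁆⁆ + ⁅⁅x,z⁆,⁅⁅x,b⁆,z⁆⁆ + ⁅⁅x,z⁆,⁅⁅x,z⁆,b⁆⁆ - ⁅⁅x,z⁆,⁅⁅x,z⁆,z⁆⁆)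
          - (⁅⁅x,z⁆,⁅⁅x,z⁆,z⁆⁆ + ⁅⁅x,z⁆,⁅⁅x,z⁆,z⁆⁆) =
          (⁅⁅x,b⁆,⁅⁅x,b⁆,z⁆⁆ + ⁅⁅x,b⁆,⁅⁅x,z⁆,b⁆⁆ + ⁅⁅x,z⁆,⁅⁅x,b⁆,b⁆⁆)
          + (⁅⁅x,b⁆,⁅⁅x,b⁆,z⁆⁆ + ⁅⁅x,b⁆,⁅⁅x,z⁆,b⁆⁆ + ⁅⁅x,z⁆,⁅⁅x,b⁆,b⁆⁆) := by
        abel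
      rw [hbz, hbz', hz0] at hh
      simpa only [sub_zero, zero_sub, add_zero, zero_add, sub_self, neg_zero] using hh.symm
    have hX : ⁅⁅x,b⁆,⁅⁅x,b⁆,z⁆⁆ + ⁅⁅x,b⁆,⁅⁅x,z⁆,b⁆⁆ + ⁅⁅x,z⁆,⁅⁅x,b⁆,b⁆⁆ = 0 := by
      have k5 : (2 : R) • (⁅⁅x,b⁆,⁅⁅x,b⁆,z⁆⁆ + ⁅⁅x,b⁆,⁅⁅x,z⁆,b⁆⁆ + ⁅⁅x,z⁆,⁅⁅x,b⁆,b⁆⁆) = 0 := by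
        rw [two_smul]; exact hXX
      exact aux_cancel (2 : R) ‹Invertible (2:R)› k5
    -- convert the two cross terms
    have c1 : ⁅⁅x,b⁆,⁅⁅x,z⁆,b⁆⁆ = ⁅⁅x,b⁆,⁅⁅x,b⁆,z⁆⁆ := by
      have s1 : ⁅z,⁅x,b⁆⁆ = -⁅⁅x,b⁆,z⁆ := (lie_skew z ⁅x,b⁆).symm
      rw [lie_lie x z b, s1, lie_sub, h3 b ⁅z,b⁆, zero_sub, lie_neg, neg_neg]
    have c2 : ⁅⁅x,z⁆,⁅⁅x,b⁆,b⁆⁆ = ⁅⁅x,b⁆,⁅⁅x,b⁆,z⁆⁆ := by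
      have s2 : ⁅⁅x,z⁆,⁅⁅x,b⁆,b⁆⁆ = -⁅⁅⁅x,b⁆,b⁆,⁅x,z⁆⁆ := (lie_skew ⁅x,z⁆ ⁅⁅x,b⁆,b⁆).symm
      have d1 : ⁅⁅⁅x,b⁆,b⁆,⁅x,z⁆⁆ = -⁅⁅x,b⁆,⁅⁅x,b⁆,z⁆⁆ := by
        rw [lie_lie ⁅x,b⁆ b ⁅x,z⁆, h3 b z, lie_zero, sub_zero]
        have s3 : ⁅b,⁅x,z⁆⁆ = ⁅⁅b,x⁆,z⁆ + ⁅x,⁅b,z⁆⁆ := by rw [lie_lie b x z]; abel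
        have s4 : ⁅b,x⁆ = -⁅x,b⁆ := (lie_skew b x).symm
        rw [s3, s4, neg_lie, lie_add, h3 b ⁅b,z⁆, add_zero, lie_neg]
      rw [s2, d1, neg_neg]
    rw [c1, c2] at hX
    have k5 : (3 : R) • ⁅⁅x,b⁆,⁅⁅x,b⁆,z⁆⁆ = 0 := by
      rw [show (3:R) = 1 + 1 + 1 from by norm_num, add_smul, add_smul, one_smul]
      exact hX
    exact aux_cancel (3 : R) ‹Invertible (3:R)› k5
  -- step 3 : ⁅x,b⁆ = 0 for all b ∈ I, then x = 0
  have hxb : ∀ b ∈ I, ⁅x, b⁆ = (0 : L) := by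
    intro b hb
    exact hI _ (LieSubmodule.lie_mem I hb) (fun z hz => hu2 b hb z hz)
  exact hann x hxb
end

section
/- Let I be an essential ideal of a Lie algebra L over a ring with 1/2, 1/3 invertible, with I strongly non-degenerate and Z(L) = 0. Then Ann_L(I) = 0, and consequently L is strongly non-degenerate. -/
private lemma half_cancel {R : Type*} {L : Type*} [CommRing R] [Invertible (2 : R)]
    [LieRing L] [LieAlgebra R L] {v : L} (h : v + v = 0) : v = 0 := by
  have h2 : (2 : R) • v = 0 := by rw [two_smul]; exact h
  calc v = ((⅟2 * 2 : R)) • v := by rw [invOf_mul_self, one_smul]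
  _ = (⅟2 : R) • ((2 : R) • v) := by rw [mul_smul]
  _ = 0 := by rw [h2, smul_zero]

private lemma third_cancel {R : Type*} {L : Type*} [CommRing R] [Invertible (3 : R)]
    [LieRing L] [LieAlgebra R L] {v : L} (h : v + v + v = 0) : v = 0 := by
  have h3 : (3 : R) • v = 0 := by
    rw [show (3 : R) = 2 + 1 by norm_num, add_smul, two_smul, one_smul]; exact h
  calc v = ((⅟3 * 3 : R)) • v := by rw [invOf_mul_self, one_smul]
  _ = (⅟3 : R) • ((3 : R) • v) := by rw [mul_smul]
  _ = 0 := by rw [h3, smul_zero]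

/-- For a sandwich `x`, images `⁅x,a⁆` pairwise commute (needs 1/2). -/
private lemma sand_l2 {R : Type*} {L : Type*} [CommRing R] [Invertible (2 : R)]
    [LieRing L] [LieAlgebra R L] (x : L) (hx : ∀ y : L, ⁅x, ⁅x, y⁆⁆ = 0) (a b : L) :
    ⁅⁅x, a⁆, ⁅x, b⁆⁆ = 0 := by
  have E1 : ⁅x, ⁅a, ⁅x, b⁆⁆⁆ = ⁅⁅x, a⁆, ⁅x, b⁆⁆ := by
    rw [leibniz_lie x a ⁅x, b⁆, hx b, lie_zero, add_zero]
  have E2 : ⁅x, ⁅a, ⁅x, b⁆⁆⁆ = -⁅⁅x, a⁆, ⁅x, b⁆⁆ := by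
    rw [leibniz_lie a x b, lie_add, hx ⁅a, b⁆, add_zero, leibniz_lie x ⁅a, x⁆ b]
    have hax : ⁅a, x⁆ = -⁅x, a⁆ := by rw [← lie_skew]
    rw [hax, lie_neg, hx a, neg_zero, zero_lie, zero_add, neg_lie]
  exact half_cancel (R := R) (eq_neg_iff_add_eq_zero.mp (E1.symm.trans E2))

/-- For a sandwich `x`, `⁅x,⁅a,⁅x,b⁆⁆⁆ = 0` (needs 1/2). -/
private lemma sand_l1 {R : Type*} {L : Type*} [CommRing R] [Invertible (2 : R)]
    [LieRing L] [LieAlgebra R L] (x : L) (hx : ∀ y : L, ⁅x, ⁅x, y⁆⁆ = 0) (a b : L) :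
    ⁅x, ⁅a, ⁅x, b⁆⁆⁆ = 0 := by
  rw [leibniz_lie x a ⁅x, b⁆, hx b, lie_zero, add_zero]
  exact sand_l2 (R := R) x hx a b

/-- Fundamental (mixed) formula for a sandwich `x`. -/
private lemma sand_F {R : Type*} {L : Type*} [CommRing R] [Invertible (2 : R)]
    [LieRing L] [LieAlgebra R L] (x : L) (hx : ∀ y : L, ⁅x, ⁅x, y⁆⁆ = 0) (a b w : L) :
    ⁅⁅x, a⁆, ⁅⁅x, b⁆, w⁆⁆ = -⁅x, ⁅a, ⁅b, ⁅x, w⁆⁆⁆⁆ := by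
  rw [lie_lie x b w, lie_sub, sand_l2 (R := R) x hx a ⁅b, w⁆, zero_sub, neg_inj,
    lie_lie x a ⁅b, ⁅x, w⁆⁆, sand_l1 (R := R) x hx b w, lie_zero, sub_zero]

/-- The key sandwich construction: with `z = ⁅x,c⁆`, `u = ⁅c,z⁆`, `t = ⁅c,u⁆`,
`e = ⁅x,t⁆`, the element `e` is itself a sandwich. -/
private lemma sand_e_abstract {R : Type*} {L : Type*} [CommRing R] [Invertible (2 : R)]
    [LieRing L] [LieAlgebra R L] (x c z u t e : L)
    (hx : ∀ y : L, ⁅x, ⁅x, y⁆⁆ = 0)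
    (hz : z = ⁅x, c⁆) (hu : u = ⁅c, z⁆) (ht : t = ⁅c, u⁆) (he : e = ⁅x, t⁆) (m : L) :
    ⁅e, ⁅e, m⁆⁆ = 0 := by
  have hxz : ⁅x, z⁆ = 0 := by rw [hz]; exact hx c
  have hxu : ⁅x, u⁆ = 0 := by
    rw [hu, leibniz_lie x c z, hxz, lie_zero, add_zero, ← hz, lie_self]
  have hzu : ⁅z, u⁆ = e := by
    rw [he, ht, leibniz_lie x c u, hxu, lie_zero, add_zero, ← hz]
  have hxe : ⁅x, e⁆ = 0 := by
    rw [← hzu, leibniz_lie x z u, hxz, hxu, zero_lie, lie_zero, add_zero]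
  have hzc : ⁅z, c⁆ = -u := by rw [hu, ← lie_skew]
  have hzp : ∀ n : L, ⁅z, ⁅x, n⁆⁆ = 0 := fun n => by
    rw [hz]; exact sand_l2 (R := R) x hx c n
  have hep : ∀ n : L, ⁅e, ⁅x, n⁆⁆ = 0 := fun n => by
    rw [he]; exact sand_l2 (R := R) x hx t n
  have hze : ⁅z, e⁆ = 0 := by rw [hz, he]; exact sand_l2 (R := R) x hx c t
  have hzup : ∀ n : L, ⁅z, ⁅u, ⁅x, n⁆⁆⁆ = 0 := fun n => by
    rw [leibniz_lie z u ⁅x, n⁆, hzu, hep n, hzp n, lie_zero, add_zero]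
  have hzcp : ∀ n : L, ⁅z, ⁅c, ⁅x, n⁆⁆⁆ = -⁅u, ⁅x, n⁆⁆ := fun n => by
    rw [leibniz_lie z c ⁅x, n⁆, hzc, hzp n, lie_zero, add_zero, neg_lie]
  have hecp : ∀ n : L, ⁅e, ⁅c, ⁅x, n⁆⁆⁆ = -⁅⁅c, e⁆, ⁅x, n⁆⁆ := fun n => by
    rw [leibniz_lie e c ⁅x, n⁆, hep n, lie_zero, add_zero,
      show ⁅e, c⁆ = -⁅c, e⁆ from by rw [← lie_skew], neg_lie]
  -- R4 : ⁅z,⁅t,p⁆⁆ = ⁅⁅c,e⁆,p⁆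
  have R4 : ∀ n : L, ⁅z, ⁅t, ⁅x, n⁆⁆⁆ = ⁅⁅c, e⁆, ⁅x, n⁆⁆ := fun n => by
    rw [ht, show ⁅⁅c, u⁆, ⁅x, n⁆⁆ = ⁅c, ⁅u, ⁅x, n⁆⁆⁆ - ⁅u, ⁅c, ⁅x, n⁆⁆⁆ from lie_lie c u _,
      lie_sub]
    rw [leibniz_lie z c ⁅u, ⁅x, n⁆⁆, hzc, hzup n, lie_zero, add_zero]
    rw [leibniz_lie z u ⁅c, ⁅x, n⁆⁆, hzu, hzcp n, hecp n]
    rw [show ⁅u, -⁅u, ⁅x, n⁆⁆⁆ = -⁅u, ⁅u, ⁅x, n⁆⁆⁆ from lie_neg u _, neg_lie]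
    abel
  -- R5 : ⁅z,⁅e,n⁆⁆ = 0 for every n
  have R5 : ∀ n : L, ⁅z, ⁅e, n⁆⁆ = 0 := by
    intro n
    have h1 : ⁅z, ⁅e, n⁆⁆ = -⁅x, ⁅c, ⁅t, ⁅x, n⁆⁆⁆⁆ := by
      rw [hz, he]; exact sand_F (R := R) x hx c t n
    have h2 : ⁅e, ⁅z, n⁆⁆ = -⁅x, ⁅t, ⁅c, ⁅x, n⁆⁆⁆⁆ := by
      rw [hz, he]; exact sand_F (R := R) x hx t c n
    have hc1 : ⁅x, ⁅c, ⁅t, ⁅x, n⁆⁆⁆⁆ = ⁅⁅c, e⁆, ⁅x, n⁆⁆ := by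
      rw [leibniz_lie x c ⁅t, ⁅x, n⁆⁆, ← hz, R4 n, sand_l1 (R := R) x hx t n, lie_zero,
        add_zero]
    have hc2 : ⁅x, ⁅t, ⁅c, ⁅x, n⁆⁆⁆⁆ = -⁅⁅c, e⁆, ⁅x, n⁆⁆ := by
      rw [leibniz_lie x t ⁅c, ⁅x, n⁆⁆, ← he, hecp n, sand_l1 (R := R) x hx c n, lie_zero,
        add_zero]
    have hjac : ⁅z, ⁅e, n⁆⁆ = ⁅e, ⁅z, n⁆⁆ := by
      rw [leibniz_lie z e n, hze, zero_lie, zero_add]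
    have e1 : ⁅z, ⁅e, n⁆⁆ = -⁅⁅c, e⁆, ⁅x, n⁆⁆ := by rw [h1, hc1]
    have e2 : ⁅e, ⁅z, n⁆⁆ = ⁅⁅c, e⁆, ⁅x, n⁆⁆ := by rw [h2, hc2, neg_neg]
    have hneg : -⁅⁅c, e⁆, ⁅x, n⁆⁆ = ⁅⁅c, e⁆, ⁅x, n⁆⁆ :=
      e1.symm.trans (hjac.trans e2)
    have hXX : ⁅⁅c, e⁆, ⁅x, n⁆⁆ + ⁅⁅c, e⁆, ⁅x, n⁆⁆ = 0 := by
      nth_rewrite 1 [← hneg]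
      exact neg_add_cancel _
    have hX0 : ⁅⁅c, e⁆, ⁅x, n⁆⁆ = 0 := half_cancel (R := R) hXX
    rw [e1, hX0, neg_zero]
  -- final assembly
  have hY : ∀ Y : L, ⁅x, Y⁆ = 0 → ⁅z, Y⁆ = 0 → ⁅e, Y⁆ = 0 := by
    intro Y hxY hzY
    have hxcY : ⁅x, ⁅c, Y⁆⁆ = 0 := by
      rw [leibniz_lie x c Y, ← hz, hzY, hxY, lie_zero, add_zero]
    have huY : ⁅u, Y⁆ = -⁅z, ⁅c, Y⁆⁆ := by
      rw [hu, lie_lie c z Y, hzY, lie_zero, zero_sub]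
    have hzz : ⁅z, ⁅z, ⁅c, Y⁆⁆⁆ = -⁅x, ⁅c, ⁅c, ⁅x, ⁅c, Y⁆⁆⁆⁆⁆ := by
      rw [hz]; exact sand_F (R := R) x hx c c ⁅c, Y⁆
    rw [← hzu, lie_lie z u Y, hzY, lie_zero, sub_zero, huY, lie_neg, hzz, hxcY,
      lie_zero, lie_zero, lie_zero, neg_zero, neg_zero]
  apply hY ⁅e, m⁆
  · rw [leibniz_lie x e m, hxe, zero_lie, zero_add, hep m]
  · exact R5 m

/-- if `I` is an essential strongly non-degenerate ideal of `L` and the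
centre of `L` is zero, then `Ann_L(I) = 0` and `L` is strongly non-degenerate. -/
theorem stmt_8 {R L : Type*} [CommRing R] [Invertible (2 : R)] [Invertible (3 : R)]
    [LieRing L] [LieAlgebra R L] (I : LieIdeal R L)
    (hess : ∀ J : LieIdeal R L, J ≠ ⊥ → I ⊓ J ≠ ⊥)
    (hI : ∀ y ∈ I, (∀ z ∈ I, ⁅y, ⁅y, z⁆⁆ = 0) → y = 0)
    (hZ : ∀ x : L, (∀ y : L, ⁅x, y⁆ = 0) → x = 0) :
    (∀ a : L, (∀ b ∈ I, ⁅a, b⁆ = 0) → a = 0) ∧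
      (∀ x : L, (∀ y : L, ⁅x, ⁅x, y⁆⁆ = 0) → x = 0) := by
  -- Part 1 : the annihilator of I is zero
  have part1 : ∀ a : L, (∀ b ∈ I, ⁅a, b⁆ = 0) → a = 0 := by
    intro a ha
    let J : LieIdeal R L :=
      { carrier := {y : L | ∀ b ∈ I, ⁅y, b⁆ = 0}
        add_mem' := fun {p q} hp hq => fun b hb => by
          rw [add_lie, hp b hb, hq b hb, add_zero]
        zero_mem' := fun b hb => zero_lie b
        smul_mem' := fun r {p} hp => fun b hb => by rw [smul_lie, hp b hb, smul_zero]
        lie_mem := fun {y p} hp => fun b hb => by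
          rw [lie_lie, hp b hb, lie_zero, hp ⁅y, b⁆ (I.lie_mem hb), zero_sub, neg_zero] }
    have hbot : I ⊓ J = ⊥ := by
      rw [LieSubmodule.eq_bot_iff]
      intro m hm
      rw [LieSubmodule.mem_inf] at hm
      exact hI m hm.1 fun z hz => by rw [hm.2 z hz, lie_zero]
    have hJ : J = ⊥ := by
      by_contra hne
      exact hess J hne hbot
    have haJ : a ∈ J := ha
    rw [hJ] at haJ
    exact (LieSubmodule.mem_bot _).mp haJ
  refine ⟨part1, ?_⟩
  intro x hx
  -- the diagonal elements are absolute zero divisors, hence zero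
  have hdiag : ∀ c ∈ I, ⁅⁅x, c⁆, ⁅⁅x, c⁆, c⁆⁆ = 0 := by
    intro c hc
    refine hI _ (I.lie_mem (I.lie_mem hc)) fun m _ => ?_
    have hneg : ⁅⁅x, c⁆, ⁅⁅x, c⁆, c⁆⁆ = -⁅x, ⁅c, ⁅c, ⁅x, c⁆⁆⁆⁆ :=
      sand_F (R := R) x hx c c c
    rw [hneg]
    simp only [neg_lie, lie_neg, neg_neg, neg_eq_zero]
    exact sand_e_abstract (R := R) x c ⁅x, c⁆ ⁅c, ⁅x, c⁆⁆ ⁅c, ⁅c, ⁅x, c⁆⁆⁆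
      ⁅x, ⁅c, ⁅c, ⁅x, c⁆⁆⁆⁆ hx rfl rfl rfl rfl m
  -- polarization : ⁅⁅x,b⁆,⁅⁅x,b⁆,w⁆⁆ = 0 for b w ∈ I
  have key : ∀ b ∈ I, ∀ w ∈ I, ⁅⁅x, b⁆, ⁅⁅x, b⁆, w⁆⁆ = 0 := by
    intro b hb w hw
    have hplus := hdiag (b + w) (I.add_mem hb hw)
    have hminus := hdiag (b - w) (I.sub_mem hb hw)
    have h8p : ⁅⁅x, b + w⁆, ⁅⁅x, b + w⁆, b + w⁆⁆ =
        ⁅⁅x, b⁆, ⁅⁅x, b⁆, b⁆⁆ + ⁅⁅x, w⁆, ⁅⁅x, w⁆, w⁆⁆ +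
        ((⁅⁅x, b⁆, ⁅⁅x, b⁆, w⁆⁆ + ⁅⁅x, b⁆, ⁅⁅x, w⁆, b⁆⁆ + ⁅⁅x, w⁆, ⁅⁅x, b⁆, b⁆⁆) +
         (⁅⁅x, b⁆, ⁅⁅x, w⁆, w⁆⁆ + ⁅⁅x, w⁆, ⁅⁅x, b⁆, w⁆⁆ + ⁅⁅x, w⁆, ⁅⁅x, w⁆, b⁆⁆)) := by
      simp only [lie_add, add_lie]
      abel
    have h8m : ⁅⁅x, b - w⁆, ⁅⁅x, b - w⁆, b - w⁆⁆ =
        ⁅⁅x, b⁆, ⁅⁅x, b⁆, b⁆⁆ - ⁅⁅x, w⁆, ⁅⁅x, w⁆, w⁆⁆ +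
        ((⁅⁅x, b⁆, ⁅⁅x, w⁆, w⁆⁆ + ⁅⁅x, w⁆, ⁅⁅x, b⁆, w⁆⁆ + ⁅⁅x, w⁆, ⁅⁅x, w⁆, b⁆⁆) -
         (⁅⁅x, b⁆, ⁅⁅x, b⁆, w⁆⁆ + ⁅⁅x, b⁆, ⁅⁅x, w⁆, b⁆⁆ + ⁅⁅x, w⁆, ⁅⁅x, b⁆, b⁆⁆)) := by
      simp only [lie_sub, sub_lie]
      abel
    rw [h8p, hdiag b hb, hdiag w hw, zero_add, zero_add] at hplus
    rw [h8m, hdiag b hb, hdiag w hw, zero_sub, neg_zero, zero_add] at hminus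
    set T1 := ⁅⁅x, b⁆, ⁅⁅x, b⁆, w⁆⁆ with hT1
    set T2 := ⁅⁅x, b⁆, ⁅⁅x, w⁆, b⁆⁆ with hT2
    set T3 := ⁅⁅x, w⁆, ⁅⁅x, b⁆, b⁆⁆ with hT3
    set S := ⁅⁅x, b⁆, ⁅⁅x, w⁆, w⁆⁆ + ⁅⁅x, w⁆, ⁅⁅x, b⁆, w⁆⁆ + ⁅⁅x, w⁆, ⁅⁅x, w⁆, b⁆⁆ with hS
    have hX : (T1 + T2 + T3) + (T1 + T2 + T3) = 0 := by
      have hcomb : (T1 + T2 + T3) + (T1 + T2 + T3) =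
          ((T1 + T2 + T3) + S) - (S - (T1 + T2 + T3)) := by abel
      rw [hcomb, hplus, hminus, sub_zero]
    have hXz : T1 + T2 + T3 = 0 := half_cancel (R := R) hX
    have h12 : T2 = T1 := by
      have hbw : ⁅⁅x, b⁆, w⁆ - ⁅⁅x, w⁆, b⁆ = ⁅x, ⁅b, w⁆⁆ := by
        rw [leibniz_lie x b w, show ⁅b, ⁅x, w⁆⁆ = -⁅⁅x, w⁆, b⁆ from by rw [← lie_skew]]
        abel
      have hsub : T1 - T2 = ⁅⁅x, b⁆, ⁅x, ⁅b, w⁆⁆⁆ := by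
        rw [hT1, hT2, ← lie_sub, hbw]
      rw [sand_l2 (R := R) x hx b ⁅b, w⁆] at hsub
      exact (sub_eq_zero.mp hsub).symm
    have h23 : T2 = T3 := by
      have hl := leibniz_lie ⁅x, b⁆ ⁅x, w⁆ b
      rw [sand_l2 (R := R) x hx b w, zero_lie, zero_add] at hl
      exact hl
    rw [h12, ← h23, h12] at hXz
    exact third_cancel (R := R) hXz
  -- conclude
  have hxb : ∀ b ∈ I, ⁅x, b⁆ = 0 := fun b hb =>
    hI _ (I.lie_mem hb) fun w hw => key b hb w hw
  exact part1 x hxb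
end

section
/- Let A be a semiprime associative algebra (2-torsion free) and a ∈ A such that [[a,x],y] = 0 for all x, y ∈ A. Then a lies in the center of A. -/
/-- Herstein's sublemma, fact (†): in a semiprime 2-torsion free
associative algebra, `[[a,x],y] = 0` for all `x, y` forces `a` to be central. -/
theorem stmt_9 {A : Type*} [NonUnitalRing A]
    (hsemi : ∀ I : TwoSidedIdeal A, (∀ x ∈ I, ∀ y ∈ I, x * y = 0) → I = ⊥)
    (htf : ∀ x : A, x + x = 0 → x = 0)
    (a : A) (h : ∀ x y : A, (a * x - x * a) * y - y * (a * x - x * a) = 0) :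
    ∀ x : A, a * x = x * a := by
  -- d x := a*x - x*a ; first: d (d x) = 0
  have hd2 : ∀ x : A, a * (a * x - x * a) - (a * x - x * a) * a = 0 := by
    intro x
    have := neg_eq_zero.mpr (h x a)
    rwa [neg_sub] at this
  -- d x * d y = 0
  have hprod : ∀ x y : A, (a * x - x * a) * (a * y - y * a) = 0 := by
    intro x y
    have e : (a*x-x*a)*(a*y-y*a) + (a*x-x*a)*(a*y-y*a) =
        (a*(a*(x*y)-(x*y)*a) - (a*(x*y)-(x*y)*a)*a)
        - ((a*(a*x-x*a) - (a*x-x*a)*a)*y + x*(a*(a*y-y*a)-(a*y-y*a)*a)) := by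
      noncomm_ring
    rw [hd2 (x*y), hd2 x, hd2 y] at e
    simp only [zero_mul, mul_zero, add_zero, sub_zero, zero_sub, sub_self, zero_add,
      neg_zero] at e
    exact htf _ e
  -- d x * u * d y = 0
  have hmid : ∀ x u y : A, (a * x - x * a) * u * (a * y - y * a) = 0 := by
    intro x u y
    have e : (a*x-x*a)*u*(a*y-y*a) =
        (a*x-x*a)*(a*(u*y)-(u*y)*a) - ((a*x-x*a)*(a*u-u*a))*y := by
      noncomm_ring
    rw [hprod, hprod, zero_mul, sub_zero] at e
    exact e
  intro x
  set c : A := a * x - x * a with hc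
  have hcc : c * c = 0 := hprod x x
  have hcuc : ∀ u : A, c * (u * c) = 0 := by
    intro u
    have := hmid x u x
    rwa [mul_assoc] at this
  set T : Set A := {t | t = c ∨ (∃ r, t = r * c) ∨ (∃ s, t = c * s) ∨ (∃ r s, t = r * c * s)}
    with hT
  set G : AddSubgroup A := AddSubgroup.closure T with hG
  have hTG : T ⊆ (G : Set A) := AddSubgroup.subset_closure
  -- closed under left multiplication
  have mulL : ∀ (r t : A), t ∈ G → r * t ∈ G := by
    intro r t ht
    have hle : G ≤ AddSubgroup.comap (AddMonoidHom.mulLeft r) G := by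
      rw [hG]
      apply (AddSubgroup.closure_le _).mpr
      rintro g hg
      simp only [SetLike.mem_coe, AddSubgroup.mem_comap]
      show r * g ∈ G
      obtain (rfl | ⟨r', rfl⟩ | ⟨s, rfl⟩ | ⟨r', s, rfl⟩) := hg
      · exact hTG (Or.inr (Or.inl ⟨r, rfl⟩))
      · exact hTG (Or.inr (Or.inl ⟨r * r', by rw [mul_assoc]⟩))
      · exact hTG (Or.inr (Or.inr (Or.inr ⟨r, s, by rw [mul_assoc]⟩)))
      · exact hTG (Or.inr (Or.inr (Or.inr ⟨r * r', s,
          by noncomm_ring⟩)))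
    exact hle ht
  -- closed under right multiplication
  have mulR : ∀ (t r : A), t ∈ G → t * r ∈ G := by
    intro t r ht
    have hle : G ≤ AddSubgroup.comap (AddMonoidHom.mulRight r) G := by
      rw [hG]
      apply (AddSubgroup.closure_le _).mpr
      rintro g hg
      simp only [SetLike.mem_coe, AddSubgroup.mem_comap]
      show g * r ∈ G
      obtain (rfl | ⟨r', rfl⟩ | ⟨s, rfl⟩ | ⟨r', s, rfl⟩) := hg
      · exact hTG (Or.inr (Or.inr (Or.inl ⟨r, rfl⟩)))
      · exact hTG (Or.inr (Or.inr (Or.inr ⟨r', r, rfl⟩)))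
      · exact hTG (Or.inr (Or.inr (Or.inl ⟨s * r, by rw [mul_assoc]⟩)))
      · exact hTG (Or.inr (Or.inr (Or.inr ⟨r', s * r, by rw [mul_assoc (r' * c)]⟩)))
    exact hle ht
  -- every element of G kills c on the right
  have tc : ∀ t ∈ G, t * c = 0 := by
    intro t ht
    have hle : G ≤ (AddMonoidHom.mulRight c).ker := by
      rw [hG]
      apply (AddSubgroup.closure_le _).mpr
      rintro g hg
      simp only [SetLike.mem_coe, AddMonoidHom.mem_ker]
      show g * c = 0
      obtain (rfl | ⟨r', rfl⟩ | ⟨s, rfl⟩ | ⟨r', s, rfl⟩) := hg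
      · exact hcc
      · rw [mul_assoc, hcc, mul_zero]
      · rw [mul_assoc, hcuc]
      · rw [mul_assoc r' c s, mul_assoc, mul_assoc, hcuc, mul_zero]
    have := hle ht
    simpa using this
  -- products of elements of G vanish
  have prodzero : ∀ t ∈ G, ∀ t' ∈ G, t * t' = 0 := by
    intro t ht t' ht'
    have hle : G ≤ (AddMonoidHom.mulLeft t).ker := by
      rw [hG]
      apply (AddSubgroup.closure_le _).mpr
      rintro g hg
      simp only [SetLike.mem_coe, AddMonoidHom.mem_ker]
      show t * g = 0
      obtain (rfl | ⟨r', rfl⟩ | ⟨s, rfl⟩ | ⟨r', s, rfl⟩) := hg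
      · exact tc t ht
      · rw [← mul_assoc]; exact tc _ (mulR t r' ht)
      · rw [← mul_assoc, tc t ht, zero_mul]
      · rw [mul_assoc r' c s, ← mul_assoc t, ← mul_assoc (t * r'), tc _ (mulR t r' ht),
          zero_mul]
    have := hle ht'
    simpa using this
  -- build the two-sided ideal
  let I : TwoSidedIdeal A := TwoSidedIdeal.mk' (G : Set A)
    G.zero_mem (fun hx hy => G.add_mem hx hy) (fun hx => G.neg_mem hx)
    (fun {x y} hy => mulL x y hy) (fun {x y} hx => mulR x y hx)
  have hmemI : ∀ z : A, z ∈ I ↔ z ∈ G := fun z => TwoSidedIdeal.mem_mk' _ _ _ _ _ _ z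
  have hIbot : I = ⊥ := by
    apply hsemi
    intro u hu v hv
    exact prodzero u ((hmemI u).mp hu) v ((hmemI v).mp hv)
  have hcI : c ∈ I := (hmemI c).mpr (hTG (Or.inl rfl))
  rw [hIbot] at hcI
  have hz : c = 0 := hcI
  rw [hc] at hz
  exact sub_eq_zero.mp hz
end

section
/- Let A be a semiprime non-commutative associative algebra. Then the map Inn(A) → Der(A)/I_Z sending ad a to the class of ad a is an injective Lie algebra homomorphism whose image is an essential ideal of Der(A)/I_Z. -/
attribute [local instance 100] LieRing.ofAssociativeRing

/-- The Lie algebra `Der(A)` of associative derivations of `A`, as a Lie subalgebra of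
`Module.End R A`. -/
def DerLie (R A : Type*) [CommRing R] [Ring A] [Algebra R A] :
    LieSubalgebra R (Module.End R A) where
  carrier := {δ | ∀ a b : A, δ (a * b) = δ a * b + a * δ b}
  add_mem' := by
    intro δ μ hδ hμ a b
    rw [LinearMap.add_apply, LinearMap.add_apply, LinearMap.add_apply, hδ a b, hμ a b,
      add_mul, mul_add]
    abel
  zero_mem' := by intro a b; simp
  smul_mem' := by
    intro c δ hδ a b
    rw [LinearMap.smul_apply, LinearMap.smul_apply, LinearMap.smul_apply, hδ a b, smul_add,
      smul_mul_assoc, mul_smul_comm]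
  lie_mem' := by
    intro δ μ hδ hμ a b
    have hδ' : ∀ a b : A, δ (a * b) = δ a * b + a * δ b := hδ
    have hμ' : ∀ a b : A, μ (a * b) = μ a * b + a * μ b := hμ
    rw [Ring.lie_def]
    simp only [LinearMap.sub_apply, Module.End.mul_apply, hδ', hμ', map_add,
      add_mul, mul_add, sub_mul, mul_sub]
    abel

/-- The inner derivation `ad a`, as an element of `DerLie R A`. -/
def adDer {R A : Type*} [CommRing R] [Ring A] [Algebra R A] (a : A) : DerLie R A :=
  ⟨LieAlgebra.ad R A a, by
    intro x y
    simp only [LieAlgebra.ad_apply, Ring.lie_def]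
    noncomm_ring⟩


section Aux

variable {R A : Type*} [CommRing R] [Ring A] [Algebra R A]

/-- In a semiprime ring, a central element of square zero is zero. -/
lemma central_sq_eq_zero
    (hsemi : ∀ I : TwoSidedIdeal A, (∀ x ∈ I, ∀ y ∈ I, x * y = 0) → I = ⊥)
    {z : A} (hz : ∀ x, z * x = x * z) (hz2 : z * z = 0) : z = 0 := by
  set I : TwoSidedIdeal A := TwoSidedIdeal.mk' {x | ∃ u, x = z * u}
    ⟨0, by simp⟩
    (fun hx hy => by
      obtain ⟨u, rfl⟩ := hx; obtain ⟨v, rfl⟩ := hy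
      exact ⟨u + v, by rw [mul_add]⟩)
    (fun hx => by
      obtain ⟨u, rfl⟩ := hx; exact ⟨-u, by rw [mul_neg]⟩)
    (fun {x y} hy => by
      obtain ⟨u, rfl⟩ := hy
      exact ⟨x * u, by rw [← mul_assoc, ← hz x, mul_assoc]⟩)
    (fun {x y} hx => by
      obtain ⟨u, rfl⟩ := hx; exact ⟨u * y, by rw [mul_assoc]⟩) with hIdef
  have hI : I = ⊥ := by
    apply hsemi
    intro x hx y hy
    rw [hIdef, TwoSidedIdeal.mem_mk'] at hx hy
    obtain ⟨u, rfl⟩ := hx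
    obtain ⟨v, rfl⟩ := hy
    calc z * u * (z * v) = z * (u * z) * v := by noncomm_ring
    _ = z * (z * u) * v := by rw [hz u]
    _ = (z * z) * (u * v) := by noncomm_ring
    _ = 0 := by rw [hz2, zero_mul]
  have hzI : z ∈ I := by
    rw [hIdef, TwoSidedIdeal.mem_mk']
    exact ⟨1, by rw [mul_one]⟩
  rw [hI] at hzI
  exact (TwoSidedIdeal.mem_bot A).1 hzI

/-- If all commutators `[c, x]` are central in a semiprime ring, then `c` is central. -/
lemma comm_of_adc_central
    (hsemi : ∀ I : TwoSidedIdeal A, (∀ x ∈ I, ∀ y ∈ I, x * y = 0) → I = ⊥)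
    {c : A} (hc : ∀ x y : A, (c * x - x * c) * y = y * (c * x - x * c)) :
    ∀ x, c * x = x * c := by
  intro x
  set z := c * x - x * c with hzdef
  have hz : ∀ y, z * y = y * z := hc x
  have hzc : ∀ y, (z * c) * y = y * (z * c) := by
    intro y
    have h := hc (x * c) y
    have e : c * (x * c) - (x * c) * c = z * c := by rw [hzdef]; noncomm_ring
    rwa [e] at h
  have hz2 : z * z = 0 := by
    have h1 : z * (c * x) = x * (z * c) := by rw [← mul_assoc, hzc x]
    have h2 : z * (x * c) = x * (z * c) := by rw [← mul_assoc, hz x, mul_assoc]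
    calc z * z = z * (c * x) - z * (x * c) := by rw [hzdef, mul_sub]
    _ = 0 := by rw [h1, h2, sub_self]
  have h0 := central_sq_eq_zero hsemi hz hz2
  have : c * x - x * c = 0 := h0
  rw [sub_eq_zero] at this; exact this

end Aux

section Helpers

variable {R A : Type*} [CommRing R] [Ring A] [Algebra R A]

@[simp] lemma adDer_coe (a : A) :
    ((adDer (R := R) a : DerLie R A) : Module.End R A) = LieAlgebra.ad R A a := rfl

lemma adDer_add (a b : A) : adDer (R := R) (a + b) = adDer a + adDer b := by
  apply Subtype.ext
  simp [map_add]

lemma adDer_smul (r : R) (a : A) : adDer (R := R) (r • a) = r • adDer a := by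
  exact Subtype.ext ((LieAlgebra.ad R A).toLinearMap.map_smul r a)

lemma adDer_zero : adDer (R := R) (0 : A) = 0 := by
  apply Subtype.ext
  simp [map_zero]

lemma adDer_neg (a : A) : adDer (R := R) (-a) = - adDer a := by
  apply Subtype.ext
  simp [map_neg]

lemma adDer_lie (a b : A) : adDer (R := R) ⁅a, b⁆ = ⁅adDer (R := R) a, adDer (R := R) b⁆ := by
  apply Subtype.ext
  show LieAlgebra.ad R A ⁅a, b⁆ = ⁅LieAlgebra.ad R A a, LieAlgebra.ad R A b⁆
  exact LieHom.map_lie (LieAlgebra.ad R A) a b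

lemma lie_adDer (δ : DerLie R A) (a : A) :
    ⁅δ, adDer (R := R) a⁆ = adDer ((δ : Module.End R A) a) := by
  have hδ : ∀ u v : A, (δ : Module.End R A) (u * v)
      = (δ : Module.End R A) u * v + u * (δ : Module.End R A) v := δ.2
  apply Subtype.ext
  rw [LieSubalgebra.coe_bracket]
  ext x
  simp only [adDer_coe, Ring.lie_def, LinearMap.sub_apply, Module.End.mul_apply,
    LieAlgebra.ad_apply, map_sub, hδ]
  abel

end Helpers

/-- for a semiprime non-commutative algebra `A`, the map
`ad a ↦ (ad a) + I_Z` is an injective Lie algebra homomorphism from `Inn(A)` into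
`Der(A)/I_Z`, whose image is an essential ideal of `Der(A)/I_Z`. -/
theorem stmt_10 {R A : Type*} [CommRing R] [Invertible (2 : R)] [Invertible (3 : R)]
    [Ring A] [Algebra R A]
    (hsemi : ∀ I : TwoSidedIdeal A, (∀ x ∈ I, ∀ y ∈ I, x * y = 0) → I = ⊥)
    (hnc : ∃ a b : A, a * b ≠ b * a)
    (IZ : LieIdeal R (DerLie R A))
    (hIZ : ∀ δ : DerLie R A,
      δ ∈ IZ ↔ ∀ a x : A, (δ : Module.End R A) a * x = x * (δ : Module.End R A) a) :
    -- the map `Inn(A) → Der(A)/I_Z`, `ad a ↦ class of ad a`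
    (∀ a b : A,
        (LieSubmodule.Quotient.mk (N := (IZ : LieSubmodule R (DerLie R A) (DerLie R A))) (adDer a)
          = LieSubmodule.Quotient.mk (N := (IZ : LieSubmodule R (DerLie R A) (DerLie R A))) (adDer b))
        → LieAlgebra.ad R A a = LieAlgebra.ad R A b) ∧
    -- it is a homomorphism of Lie algebras
    (∀ a b : A,
        LieSubmodule.Quotient.mk (N := (IZ : LieSubmodule R (DerLie R A) (DerLie R A))) (adDer ⁅a, b⁆)
          = ⁅LieSubmodule.Quotient.mk (N := (IZ : LieSubmodule R (DerLie R A) (DerLie R A))) (adDer a),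
             LieSubmodule.Quotient.mk (N := (IZ : LieSubmodule R (DerLie R A) (DerLie R A))) (adDer b)⁆) ∧
    -- its image is an essential ideal of `Der(A)/I_Z`
    (∃ J : LieIdeal R (DerLie R A ⧸ IZ),
      (∀ x : DerLie R A ⧸ IZ, x ∈ J ↔ ∃ a : A,
          LieSubmodule.Quotient.mk (N := (IZ : LieSubmodule R (DerLie R A) (DerLie R A))) (adDer a) = x) ∧
      ∀ J' : LieIdeal R (DerLie R A ⧸ IZ), J' ≠ ⊥ → J ⊓ J' ≠ ⊥) := by
  classical
  have key : ∀ c : A, adDer (R := R) c ∈ IZ → ∀ x, c * x = x * c := by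
    intro c hc
    have h := (hIZ _).1 hc
    apply comm_of_adc_central hsemi
    intro x y
    have h2 := h x y
    simpa [Ring.lie_def] using h2
  refine ⟨?_, ?_, ?_⟩
  · -- injectivity
    intro a b hab
    have hmem : adDer (R := R) a - adDer b ∈ IZ :=
      (Submodule.Quotient.eq
        ((IZ : LieSubmodule R (DerLie R A) (DerLie R A)) : Submodule R (DerLie R A))).1 hab
    have hsub : adDer (R := R) a - adDer b = adDer (a - b) := by
      apply Subtype.ext
      simp [sub_eq_add_neg, adDer_add, adDer_neg]
    rw [hsub] at hmem
    have hcent := key _ hmem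
    ext x
    simp only [LieAlgebra.ad_apply, Ring.lie_def]
    have h1 := hcent x
    rw [← sub_eq_zero]
    have h0 : (a - b) * x - x * (a - b) = 0 := sub_eq_zero.2 h1
    calc a * x - x * a - (b * x - x * b) = (a - b) * x - x * (a - b) := by noncomm_ring
    _ = 0 := h0
  · -- homomorphism
    intro a b
    rw [adDer_lie]
    exact LieSubmodule.Quotient.mk_bracket _ _ _
  · -- essential ideal
    set f : A → (DerLie R A ⧸ IZ) := fun a : A =>
      LieSubmodule.Quotient.mk (N := (IZ : LieSubmodule R (DerLie R A) (DerLie R A)))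
        (adDer a) with hf
    refine ⟨{ carrier := Set.range f,
              add_mem' := ?_,
              zero_mem' := ?_,
              smul_mem' := ?_,
              lie_mem := ?_ }, fun x => Iff.rfl, ?_⟩
    · rintro _ _ ⟨a, rfl⟩ ⟨b, rfl⟩
      exact ⟨a + b, by simp [hf, adDer_add]⟩
    · exact ⟨0, by simp [hf, adDer_zero]⟩
    · rintro r _ ⟨a, rfl⟩
      exact ⟨r • a, by simp [hf, adDer_smul]⟩
    · rintro x _ ⟨a, rfl⟩
      obtain ⟨δ, rfl⟩ := Submodule.Quotient.mk_surjective _ x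
      refine ⟨(δ : Module.End R A) a, ?_⟩
      show LieSubmodule.Quotient.mk (N := (IZ : LieSubmodule R (DerLie R A) (DerLie R A)))
        (adDer ((δ : Module.End R A) a)) = _
      rw [← lie_adDer, LieSubmodule.Quotient.mk_bracket]
    · intro J' hJ' hbot
      obtain ⟨q, hqJ', hq0⟩ : ∃ q, q ∈ J' ∧ q ≠ 0 := by
        by_contra h
        push_neg at h
        exact hJ' ((LieSubmodule.eq_bot_iff J').2 h)
      obtain ⟨δ, rfl⟩ := Submodule.Quotient.mk_surjective _ q
      have hδ : δ ∉ IZ := fun h => hq0 (LieSubmodule.Quotient.mk_eq_zero'.2 h)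
      rw [hIZ] at hδ
      push_neg at hδ
      obtain ⟨a, x, hax⟩ := hδ
      have hbr : f (-(δ : Module.End R A) a)
          = ⁅f a, (Submodule.Quotient.mk δ : DerLie R A ⧸ IZ)⁆ := by
        show LieSubmodule.Quotient.mk (N := (IZ : LieSubmodule R (DerLie R A) (DerLie R A)))
            (adDer (-(δ : Module.End R A) a)) = _
        rw [adDer_neg, ← lie_adDer, lie_skew, LieSubmodule.Quotient.mk_bracket]
      have hm'J : ⁅f a, (Submodule.Quotient.mk δ : DerLie R A ⧸ IZ)⁆ ∈ Set.range f :=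
        ⟨-(δ : Module.End R A) a, hbr⟩
      have hm'J' : ⁅f a, (Submodule.Quotient.mk δ : DerLie R A ⧸ IZ)⁆ ∈ J' :=
        J'.lie_mem hqJ'
      have hmm : ⁅f a, (Submodule.Quotient.mk δ : DerLie R A ⧸ IZ)⁆
          ∈ (⊥ : LieIdeal R (DerLie R A ⧸ IZ)) := by
        rw [← hbot]
        exact (LieSubmodule.mem_inf _ _ _).2 ⟨hm'J, hm'J'⟩
      have hm0 := (LieSubmodule.mem_bot _).1 hmm
      have hmem : adDer (R := R) (-(δ : Module.End R A) a) ∈ IZ := by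
        rw [← LieSubmodule.Quotient.mk_eq_zero'
          (N := (IZ : LieSubmodule R (DerLie R A) (DerLie R A)))]
        show f (-(δ : Module.End R A) a) = 0
        rw [hbr, hm0]
      have hc := key _ hmem x
      rw [neg_mul, mul_neg, neg_inj] at hc
      exact hax hc
end

section
/- Let A be a semiprime associative algebra and δ ∈ Der(A) with δ(A) ⊆ Z(A), and let d ∈ Der(A) be any derivation. Then the commutator μ = [δ, d] = δ∘d − d∘δ annihilates all commutators: μ([a,b]) = 0 for all a, b ∈ A. -/
/-- if `A` is semiprime, `δ` is a derivation with `δ(A) ⊆ Z(A)` and `d`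
is any derivation, then `μ = [δ,d]` kills all commutators. -/
theorem stmt_11 {R A : Type*} [CommRing R] [Ring A] [Algebra R A]
    (hsemi : ∀ I : TwoSidedIdeal A, (∀ x ∈ I, ∀ y ∈ I, x * y = 0) → I = ⊥)
    (δ d : Module.End R A)
    (hδ : ∀ a b : A, δ (a * b) = δ a * b + a * δ b)
    (hd : ∀ a b : A, d (a * b) = d a * b + a * d b)
    (hδZ : ∀ a x : A, δ a * x = x * δ a) :
    ∀ a b : A, δ (d (a * b - b * a)) - d (δ (a * b - b * a)) = 0 := by
  -- `δ` kills every commutator, since its image is central.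
  have hz : ∀ x y : A, δ (x * y - y * x) = 0 := by
    intro x y
    rw [map_sub, hδ x y, hδ y x, hδZ x y, hδZ y x]
    abel
  intro a b
  rw [hz a b, map_zero, sub_zero]
  have hdc : d (a * b - b * a) = (d a * b - b * d a) + (a * d b - d b * a) := by
    rw [map_sub, hd, hd]; abel
  rw [hdc, map_add, hz, hz, add_zero]
end

section
/- Let A be a semiprime non-commutative associative algebra whose center Z(A) contains no nonzero associative ideal of A. Then every derivation δ of A with δ(A) ⊆ Z(A) is zero, i.e., I_Z = 0. -/
/-- Auxiliary: in a semiprime ring (in the sense below), `u * A * u = 0` implies `u = 0`. -/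
theorem aux_semiprime_step {A : Type*} [Ring A]
    (hsemi : ∀ I : TwoSidedIdeal A, (∀ x ∈ I, ∀ y ∈ I, x * y = 0) → I = ⊥)
    (u : A) (hu : ∀ t : A, u * t * u = 0) : u = 0 := by
  classical
  set S : Set A := {x | ∃ a b : A, x = a * u * b} with hS
  set G : AddSubgroup A := AddSubgroup.closure S with hG
  have hmul_left : ∀ (r : A) {x : A}, x ∈ G → r * x ∈ G := by
    intro r x hx
    refine AddSubgroup.closure_induction (fun y hy => ?_) ?_ (fun a b _ _ ha hb => ?_)
      (fun a _ ha => ?_) hx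
    · obtain ⟨p, q, rfl⟩ := hy
      exact AddSubgroup.subset_closure ⟨r * p, q, by noncomm_ring⟩
    · simpa using (AddSubgroup.zero_mem G)
    · simpa [mul_add] using AddSubgroup.add_mem G ha hb
    · simpa [mul_neg] using AddSubgroup.neg_mem G ha
  have hmul_right : ∀ (r : A) {x : A}, x ∈ G → x * r ∈ G := by
    intro r x hx
    refine AddSubgroup.closure_induction (fun y hy => ?_) ?_ (fun a b _ _ ha hb => ?_)
      (fun a _ ha => ?_) hx
    · obtain ⟨p, q, rfl⟩ := hy
      exact AddSubgroup.subset_closure ⟨p, q * r, by noncomm_ring⟩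
    · simpa using (AddSubgroup.zero_mem G)
    · simpa [add_mul] using AddSubgroup.add_mem G ha hb
    · simpa [neg_mul] using AddSubgroup.neg_mem G ha
  set I : TwoSidedIdeal A := TwoSidedIdeal.mk' (G : Set A) (AddSubgroup.zero_mem G)
    (fun ha hb => AddSubgroup.add_mem G ha hb) (fun ha => AddSubgroup.neg_mem G ha)
    (fun {x y} hy => hmul_left x hy) (fun {x y} hx => hmul_right y hx) with hI
  have hmemI : ∀ x : A, x ∈ I ↔ x ∈ G := by
    intro x; rw [hI, TwoSidedIdeal.mem_mk']; rfl
  have hzero : ∀ x ∈ I, ∀ y ∈ I, x * y = 0 := by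
    intro x hx y hy
    rw [hmemI] at hx hy
    refine AddSubgroup.closure_induction (fun a ha => ?_) (by simp)
      (fun a b _ _ ha hb => by rw [mul_add, ha, hb, add_zero])
      (fun a _ ha => by rw [mul_neg, ha, neg_zero]) hy
    refine AddSubgroup.closure_induction (fun c hc => ?_) (by simp)
      (fun c d _ _ hc hd => by rw [add_mul, hc, hd, add_zero])
      (fun c _ hc => by rw [neg_mul, hc, neg_zero]) hx
    obtain ⟨p, q, rfl⟩ := ha
    obtain ⟨p', q', rfl⟩ := hc
    have h := hu (q' * p)
    calc p' * u * q' * (p * u * q) = p' * (u * (q' * p) * u) * q := by noncomm_ring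
      _ = 0 := by rw [h]; noncomm_ring
  have hbot := hsemi I hzero
  have humem : u ∈ I := (hmemI u).2 (AddSubgroup.subset_closure ⟨1, 1, by noncomm_ring⟩)
  rw [hbot] at humem
  simpa using humem

/-- Auxiliary: if the center contains no nonzero ideal, then a central element
annihilating all commutators is zero. -/
theorem aux_center_step {A : Type*} [Ring A]
    (hZ : ∀ I : TwoSidedIdeal A, (∀ x ∈ I, ∀ y : A, x * y = y * x) → I = ⊥)
    (v : A) (hv1 : ∀ y : A, v * y = y * v) (hv2 : ∀ b c : A, v * (b * c - c * b) = 0) :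
    v = 0 := by
  set C : Set A := {x | (∀ y : A, x * y = y * x) ∧ ∀ b c : A, x * (b * c - c * b) = 0} with hC
  have hmul_left : ∀ {r x : A}, x ∈ C → r * x ∈ C := by
    rintro r x ⟨hx1, hx2⟩
    have hxr : ∀ y : A, x * (r * y) = x * (y * r) := by
      intro y
      have := hx2 r y
      linear_combination (norm := noncomm_ring) this
    constructor
    · intro y
      linear_combination (norm := noncomm_ring) r * (hx1 y) + hx1 (y*r) + hxr y - hx1 (r*y)
    · intro b c
      calc r * x * (b * c - c * b) = r * (x * (b * c - c * b)) := by rw [mul_assoc]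
        _ = 0 := by rw [hx2 b c, mul_zero]
  have hmul_right : ∀ {x r : A}, x ∈ C → x * r ∈ C := by
    rintro x r hx
    have h2 : x * r = r * x := hx.1 r
    rw [h2]
    exact hmul_left hx
  set I : TwoSidedIdeal A := TwoSidedIdeal.mk' C
    ⟨fun y => by simp, fun b c => by simp⟩
    (fun {a b} ha hb => ⟨fun y => by rw [add_mul, mul_add, ha.1, hb.1],
      fun b' c' => by rw [add_mul, ha.2, hb.2, add_zero]⟩)
    (fun {a} ha => ⟨fun y => by rw [neg_mul, mul_neg, ha.1],
      fun b' c' => by rw [neg_mul, ha.2, neg_zero]⟩)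
    (fun {x y} hy => hmul_left hy)
    (fun {x y} hx => hmul_right hx) with hI
  have hbot := hZ I (by
    intro x hx y
    rw [hI, TwoSidedIdeal.mem_mk'] at hx
    exact hx.1 y)
  have hv : v ∈ I := by
    rw [hI, TwoSidedIdeal.mem_mk']
    exact ⟨hv1, hv2⟩
  rw [hbot] at hv
  simpa using hv

/-- if `A` is semiprime, non-commutative, and the center contains no
nonzero associative ideal, then every derivation mapping `A` into the center is zero. -/
theorem stmt_12 {R A : Type*} [CommRing R] [Invertible (2 : R)] [Invertible (3 : R)]
    [Ring A] [Algebra R A]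
    (hsemi : ∀ I : TwoSidedIdeal A, (∀ x ∈ I, ∀ y ∈ I, x * y = 0) → I = ⊥)
    (hnc : ∃ a b : A, a * b ≠ b * a)
    (hZ : ∀ I : TwoSidedIdeal A, (∀ x ∈ I, ∀ y : A, x * y = y * x) → I = ⊥)
    (δ : Module.End R A)
    (hδ : ∀ a b : A, δ (a * b) = δ a * b + a * δ b)
    (hδZ : ∀ a x : A, δ a * x = x * δ a) :
    δ = 0 := by
  -- Step 1: δ x * [y, x] = 0
  have L1 : ∀ x y : A, δ x * (y * x - x * y) = 0 := by
    intro x y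
    have h := hδZ (x*y) x
    rw [hδ] at h
    have h1 := hδZ y x
    have h2 := hδZ x x
    linear_combination (norm := noncomm_ring) h - x * h1 - h2 * y
  -- Step 2: δ x * y * [z, x] = 0
  have L2 : ∀ x y z : A, δ x * y * (z * x - x * z) = 0 := by
    intro x y z
    have h1 := L1 x (y*z)
    have h2 := L1 x y
    linear_combination (norm := noncomm_ring) h1 - h2 * z
  -- Step 3 (linearization): δ x * y * [z, w] + δ w * y * [z, x] = 0
  have L3 : ∀ x w y z : A, δ x * y * (z * w - w * z) + δ w * y * (z * x - x * z) = 0 := by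
    intro x w y z
    have h := L2 (x + w) y z
    rw [map_add] at h
    have hx := L2 x y z
    have hw := L2 w y z
    linear_combination (norm := noncomm_ring) h - hx - hw
  set_option maxHeartbeats 1000000 in
  -- Step 4: u * t * u = 0 for u = δ x * y * [z, w]
  have L4 : ∀ x y z w t : A,
      (δ x * y * (z*w - w*z)) * t * (δ x * y * (z*w - w*z)) = 0 := by
    intro x y z w t
    have h3 := L3 x w y z
    have hkey := L2 x (δ w * (y * (z*w - w*z)) * t * y) z
    have hc1 : ∀ m : A, m * δ w = δ w * m := fun m => (hδZ w m).symm
    have hc2 := hδZ w (δ x)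
    linear_combination (norm := noncomm_ring)
      (δ x * y * (z*w - w*z) * t) * h3 - hkey
      - (hc1 (δ x * y * (z*w - w*z) * t)) * (y * (z * x - x * z))
      - hc2 * (y * (z*w - w*z) * t * (y * (z * x - x * z)))
  -- Step 5: by semiprimeness, δ x * y * [z, w] = 0; in particular (y = 1) δ x * [z, w] = 0
  have L5 : ∀ x z w : A, δ x * (z * w - w * z) = 0 := by
    intro x z w
    have := aux_semiprime_step hsemi (δ x * (1:A) * (z*w - w*z)) (L4 x 1 z w)
    simpa using this
  -- Step 6: δ x is central and kills commutators, hence zero.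
  have final : ∀ x : A, δ x = 0 := fun x =>
    aux_center_step hZ (δ x) (hδZ x) (L5 x)
  exact LinearMap.ext final
end

section
/- Let A be a prime non-commutative associative algebra over a ring in which 2 and 3 are invertible. Then the Lie algebra Der(A) of derivations of A is strongly non-degenerate: if δ ∈ Der(A) satisfies [δ,[δ,μ]] = 0 for all μ ∈ Der(A), then δ = 0. -/
attribute [local instance 100] LieRing.ofAssociativeRing

lemma prime_elem' {A : Type*} [Ring A]
    (hprime : ∀ I J : TwoSidedIdeal A, (∀ x ∈ I, ∀ y ∈ J, x * y = 0) → I = ⊥ ∨ J = ⊥)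
    {x y : A} (h : ∀ c, x * c * y = 0) : x = 0 ∨ y = 0 := by
  let I : TwoSidedIdeal A := TwoSidedIdeal.mk' {r | ∀ c, r * c * y = 0}
    (by intro c; simp)
    (fun {r s} hr hs c => by rw [add_mul, add_mul, hr c, hs c, add_zero])
    (fun {r} hr c => by rw [neg_mul, neg_mul, hr c, neg_zero])
    (fun {p q} hq c => by rw [mul_assoc, mul_assoc, ← mul_assoc q, hq c, mul_zero])
    (fun {p q} hp c => by rw [mul_assoc p q c]; exact hp (q * c))
  let J : TwoSidedIdeal A := TwoSidedIdeal.mk' {s | ∀ r, (∀ c, r * c * y = 0) → r * s = 0}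
    (fun r _ => by rw [mul_zero])
    (fun {s t} hs ht r hr => by rw [mul_add, hs r hr, ht r hr, add_zero])
    (fun {s} hs r hr => by rw [mul_neg, hs r hr, neg_zero])
    (fun {p q} hq r hr => by
      rw [← mul_assoc]
      exact hq (r * p) (fun c => by rw [mul_assoc r p c]; exact hr (p*c)))
    (fun {p q} hp r hr => by rw [← mul_assoc, hp r hr, zero_mul])
  rcases hprime I J (fun u hu v hv => by
      rw [TwoSidedIdeal.mem_mk'] at hu hv
      exact hv u hu) with hI | hJ
  · left
    have hx : x ∈ I := by rw [TwoSidedIdeal.mem_mk']; exact h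
    rw [hI, TwoSidedIdeal.mem_bot] at hx; exact hx
  · right
    have hy : y ∈ J := by
      rw [TwoSidedIdeal.mem_mk']
      intro r hr
      have := hr 1; rwa [mul_one] at this
    rw [hJ, TwoSidedIdeal.mem_bot] at hy; exact hy



/-- if `A` is a prime non-commutative associative algebra (2, 3
invertible in the base ring), then the Lie algebra `Der(A)` of derivations of `A` is
strongly non-degenerate. -/
theorem stmt_13 {R A : Type*} [CommRing R] [Invertible (2 : R)] [Invertible (3 : R)]
    [Ring A] [Algebra R A]
    (hprime : ∀ I J : TwoSidedIdeal A, (∀ x ∈ I, ∀ y ∈ J, x * y = 0) → I = ⊥ ∨ J = ⊥)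
    (hnc : ∃ a b : A, a * b ≠ b * a) :
    ∀ δ : DerLie R A, (∀ μ : DerLie R A, ⁅δ, ⁅δ, μ⁆⁆ = 0) → δ = 0 := by
  intro δ h
  set d : Module.End R A := (δ : Module.End R A) with hd_def
  have hd : ∀ a b : A, d (a * b) = d a * b + a * d b := δ.2
  have hcen : ∀ a b : A, d (d a) * b = b * d (d a) := by
    intro a b
    have h0 : ((⁅δ, ⁅δ, adDer a⁆⁆ : DerLie R A) : Module.End R A) b = 0 := by
      rw [h (adDer a)]; simp
    have hcoe : ((⁅δ, ⁅δ, adDer a⁆⁆ : DerLie R A) : Module.End R A)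
        = ⁅d, ⁅d, LieAlgebra.ad R A a⁆⁆ := by
      rw [LieSubalgebra.coe_bracket, LieSubalgebra.coe_bracket]; rfl
    rw [hcoe] at h0
    simp only [Ring.lie_def, LinearMap.sub_apply, Module.End.mul_apply, LieAlgebra.ad_apply,
      Ring.lie_def, map_sub, map_add, hd] at h0
    rw [← sub_eq_zero, ← h0]
    abel
  have main : ∀ x : A, d x = 0 := by
      have hel : ∀ {x y : A}, (∀ c, x * c * y = 0) → x = 0 ∨ y = 0 := fun h => prime_elem' hprime h
      have halve : ∀ x : A, x + x = 0 → x = 0 := by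
        intro x hx
        have h2 : (2:R) • x = 0 := by rw [two_smul]; exact hx
        calc x = ⅟(2:R) • ((2:R) • x) := (invOf_smul_smul (2:R) x).symm
        _ = 0 := by rw [h2, smul_zero]
      have hd2 : ∀ x y : A,
          d (d (x*y)) = d (d x) * y + (d x * d y + d x * d y) + x * d (d y) := by
        intro x y
        rw [hd x y, map_add, hd (d x) y, hd x (d y)]
        abel
      obtain ⟨a₀, b₀, hab⟩ := hnc
      by_cases hz : ∀ y : A, d (d y) = 0
      · -- easy branch: d² = 0
        have e1 : ∀ x y : A, d x * d y = 0 := by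
          intro x y
          have h1 := hd2 x y
          simp only [hz, zero_mul, mul_zero, zero_add, add_zero] at h1
          exact halve _ h1.symm
        have e2 : ∀ x : A, ∀ c, d x * c * d x = 0 := by
          intro x c
          have h1 : d x * d (c * x) = 0 := e1 x (c*x)
          rw [hd c x] at h1
          linear_combination (norm := noncomm_ring) h1 - (e1 x c) * x
        intro x
        rcases hel (e2 x) with h | h <;> exact h
      · -- hard branch: some d² y₀ ≠ 0
        push_neg at hz
        obtain ⟨y₀, hy₀⟩ := hz
        -- every element killed by d is central
        have K1 : ∀ u : A, d u = 0 → ∀ c, u * c = c * u := by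
          intro u hu c
          have hu2 : d (d u) = 0 := by rw [hu, map_zero]
          have hdu2 : d (d (u * y₀)) = u * d (d y₀) := by
            rw [hd2 u y₀, hu, map_zero]
            simp
          have hc1 : (u * d (d y₀)) * c = c * (u * d (d y₀)) := by
            rw [← hdu2]; exact hcen (u*y₀) c
          have step1 : d (d y₀) * (u * c - c * u) = 0 := by
            linear_combination (norm := noncomm_ring)
              hc1 + (hcen y₀ u) * c - (hcen y₀ c) * u - c * (hcen y₀ u)
          have step2 : ∀ e, d (d y₀) * e * (u * c - c * u) = 0 := by
            intro e
            linear_combination (norm := noncomm_ring)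
              e * step1 + (hcen y₀ e) * (u * c - c * u)
          rcases hel step2 with h | h
          · exact absurd h hy₀
          · exact sub_eq_zero.mp h
        have K2 : ∀ x : A, d (d x * x - x * d x) = 0 := by
          intro x
          rw [map_sub, hd (d x) x, hd x (d x)]
          linear_combination (norm := noncomm_ring) (hcen x x)
        have Ku : ∀ x c : A, (d x * x - x * d x) * c = c * (d x * x - x * d x) :=
          fun x c => K1 _ (K2 x) c
        -- W := d x * (x*x) - (x*x) * d x is central
        have hW : ∀ x c : A, (d x * (x*x) - (x*x) * d x) * c = c * (d x * (x*x) - (x*x) * d x) := by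
          intro x c
          have h1 := Ku x c
          have h2 := Ku (x*x) c
          rw [hd x x] at h2
          have h3 := Ku (x + x*x) c
          rw [map_add, hd x x] at h3
          have hdup : ((d x * (x*x) - (x*x) * d x) * c - c * (d x * (x*x) - (x*x) * d x))
              + ((d x * (x*x) - (x*x) * d x) * c - c * (d x * (x*x) - (x*x) * d x)) = 0 := by
            linear_combination (norm := noncomm_ring) h3 - h1 - h2
          exact sub_eq_zero.mp (halve _ hdup)
        -- (d x * x - x * d x) * x is central
        have hux : ∀ x c : A, ((d x * x - x * d x) * x) * c = c * ((d x * x - x * d x) * x) := by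
          intro x c
          have hdup : (((d x * x - x * d x) * x) * c - c * ((d x * x - x * d x) * x))
              + (((d x * x - x * d x) * x) * c - c * ((d x * x - x * d x) * x)) = 0 := by
            linear_combination (norm := noncomm_ring) hW x c + (Ku x x) * c - c * (Ku x x)
          exact sub_eq_zero.mp (halve _ hdup)
        -- d is commuting: d x * x = x * d x
        have hcomm : ∀ x : A, d x * x = x * d x := by
          intro x
          have hstep : ∀ e, (d x * x - x * d x) * e * (x * d x - d x * x) = 0 := by
            intro e
            linear_combination (norm := noncomm_ring)
              (Ku x e) * (x * d x - d x * x) + e * (hux x (d x)) - e * (Ku x (d x)) * x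
          rcases hel hstep with h | h
          · exact sub_eq_zero.mp (by linear_combination (norm := noncomm_ring) h)
          · exact (sub_eq_zero.mp h).symm
        have hlin : ∀ x y : A, d x * y + d y * x = x * d y + y * d x := by
          intro x y
          have h := hcomm (x + y)
          rw [map_add] at h
          linear_combination (norm := noncomm_ring) h - hcomm x - hcomm y
        have h6 : ∀ x y : A, d x * (y * x) = d x * (x * y) := by
          intro x y
          have h := hlin x (x*y)
          rw [hd x y] at h
          linear_combination (norm := noncomm_ring) h - x * (hlin x y) - 2 * (hcomm x) * y
        have h7 : ∀ x c : A, ∀ y, d x * y * (c * x - x * c) = 0 := by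
          intro x c y
          linear_combination (norm := noncomm_ring) h6 x (y*c) - (h6 x y) * c
        have hx : ∀ x : A, (∃ c, c * x ≠ x * c) → d x = 0 := by
          rintro x ⟨c, hc⟩
          rcases hel (h7 x c) with h | h
          · exact h
          · exact absurd (sub_eq_zero.mp h) hc
        have ha₀ : d a₀ = 0 := hx a₀ ⟨b₀, fun hcc => hab hcc.symm⟩
        intro x
        by_cases hxc : ∃ c, c * x ≠ x * c
        · exact hx x hxc
        · push_neg at hxc
          have hxa : d (x + a₀) = 0 := by
            apply hx (x + a₀)
            refine ⟨b₀, fun hcc => hab ?_⟩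
            rw [mul_add, add_mul, hxc b₀] at hcc
            have := add_left_cancel hcc
            exact this.symm
          have := hxa
          rw [map_add, ha₀, add_zero] at this
          exact this
  apply Subtype.ext
  ext x
  simpa using main x
end

section
/- Let A be a *-semiprime associative algebra with involution, K its set of skew elements, and suppose k ∈ K satisfies (ad k)^3(t) = 0 for all t ∈ K, where 2 and 3 are invertible. If moreover [k,[k,K]] ⊆ Z(A), then (ad k)^2(t) = 0 for all t ∈ K. -/
private lemma aux_smul_cancel {R A : Type*} [CommRing R] [Ring A] [Algebra R A]
    (n : R) [Invertible n] {x : A} (h : n • x = 0) : x = 0 := by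
  have h2 := congrArg (fun y => ⅟n • y) h
  simpa [smul_smul] using h2

private lemma aux_central_zero {A : Type*} [Ring A] [StarRing A]
    (hsemi : ∀ I : TwoSidedIdeal A, (∀ x ∈ I, star x ∈ I) →
      (∀ x ∈ I, ∀ y ∈ I, x * y = 0) → I = ⊥)
    (z : A) (hcen : ∀ x, z * x = x * z) (hst : star z = z ∨ star z = -z)
    (hz2 : z * z = 0) : z = 0 := by
  let I : TwoSidedIdeal A := TwoSidedIdeal.mk' {x | ∃ y, x = z * y}
    ⟨0, by simp⟩
    (by rintro x y ⟨a, rfl⟩ ⟨b, rfl⟩; exact ⟨a + b, by rw [mul_add]⟩)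
    (by rintro x ⟨a, rfl⟩; exact ⟨-a, by rw [mul_neg]⟩)
    (by rintro x y ⟨a, rfl⟩; exact ⟨x * a, by rw [← mul_assoc, ← hcen x, mul_assoc]⟩)
    (by rintro x y ⟨a, rfl⟩; exact ⟨a * y, by rw [mul_assoc]⟩)
  have hmem : ∀ x : A, x ∈ I ↔ ∃ y, x = z * y := fun x =>
    TwoSidedIdeal.mem_mk' _ _ _ _ _ _ x
  have hI : I = ⊥ := by
    apply hsemi
    · intro x hx
      obtain ⟨a, rfl⟩ := (hmem x).1 hx
      refine (hmem _).2 ?_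
      rcases hst with h | h
      · exact ⟨star a, by rw [star_mul, h, hcen (star a)]⟩
      · exact ⟨-star a, by rw [star_mul, h, mul_neg, mul_neg, hcen (star a)]⟩
    · intro x hx y hy
      obtain ⟨a, rfl⟩ := (hmem x).1 hx
      obtain ⟨b, rfl⟩ := (hmem y).1 hy
      calc z * a * (z * b) = z * (a * z) * b := by rw [mul_assoc, mul_assoc, mul_assoc]
        _ = z * (z * a) * b := by rw [hcen a]
        _ = (z * z) * (a * b) := by rw [← mul_assoc, ← mul_assoc, mul_assoc (z*z) a b]
        _ = 0 := by rw [hz2, zero_mul]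
  have hz : z ∈ I := (hmem z).2 ⟨1, (mul_one z).symm⟩
  rw [hI, TwoSidedIdeal.mem_bot] at hz
  exact hz

/-- in a `*`-semiprime algebra, if `k` is skew, `(ad k)^3` vanishes on the
skew elements `K`, and `[k,[k,K]] ⊆ Z(A)`, then `(ad k)^2` vanishes on `K`. -/
theorem stmt_19 {R A : Type*} [CommRing R] [Invertible (2 : R)] [Invertible (3 : R)]
    [Ring A] [Algebra R A] [StarRing A]
    (hsemi : ∀ I : TwoSidedIdeal A, (∀ x ∈ I, star x ∈ I) →
      (∀ x ∈ I, ∀ y ∈ I, x * y = 0) → I = ⊥)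
    (k : A) (hk : star k = -k)
    (h3 : ∀ t : A, star t = -t → ⁅k, ⁅k, ⁅k, t⁆⁆⁆ = 0)
    (hZ : ∀ t : A, star t = -t → ∀ x : A, ⁅k, ⁅k, t⁆⁆ * x = x * ⁅k, ⁅k, t⁆⁆) :
    ∀ t : A, star t = -t → ⁅k, ⁅k, t⁆⁆ = 0 := by
  intro t ht
  have hc := hZ t ht
  have hd := h3 t ht
  set u := ⁅k, t⁆ with hu
  set c := ⁅k, u⁆ with hcdef
  -- basic star facts
  have hus : star u = -u := by
    rw [hu, Ring.lie_def]
    simp only [star_sub, star_mul, ht, hk, neg_mul, mul_neg, neg_neg]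
    abel
  have hcu : c = k * u - u * k := by rw [hcdef, Ring.lie_def]
  have hcs : star c = -c := by
    rw [hcu]
    simp only [star_sub, star_mul, hus, hk, neg_mul, mul_neg, neg_neg]
    abel
  -- first identity : from t*k*t
  have hskew1 : star (t * k * t) = -(t * k * t) := by
    simp only [star_mul, ht, hk, neg_mul, mul_neg, neg_neg, mul_assoc]
  have id1 : ⁅k, ⁅k, ⁅k, t * k * t⁆⁆⁆ =
      ⁅k, c⁆ * k * t + t * k * ⁅k, c⁆ +
      (c * k * u + c * k * u + c * k * u) +
      (u * k * c + u * k * c + u * k * c) := by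
    rw [hcdef, hu]
    simp only [Ring.lie_def]
    noncomm_ring
  have e1 := h3 (t * k * t) hskew1
  rw [id1, hd] at e1
  simp only [zero_mul, mul_zero, zero_add, add_zero] at e1
  have e1' : c * k * u + u * k * c = 0 := by
    apply aux_smul_cancel (3 : R)
    have hm : (3 : R) • (c * k * u + u * k * c) =
        c * k * u + c * k * u + c * k * u + (u * k * c + u * k * c + u * k * c) := by
      module
    rw [hm]; exact e1
  have eq1 : c * u * k = -(c * k * u) := by
    have h5 : c * u * k = u * k * c := by rw [mul_assoc, hc (u * k)]
    rw [h5]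
    exact eq_neg_of_add_eq_zero_right e1'
  -- second identity : from t*k*u + u*k*t
  have hskew2 : star (t * k * u + u * k * t) = -(t * k * u + u * k * t) := by
    simp only [star_add, star_mul, ht, hk, hus, neg_mul, mul_neg, neg_neg, mul_assoc]
    abel
  have id2 : ⁅k, ⁅k, ⁅k, t * k * u + u * k * t⁆⁆⁆ =
      (⁅k, c⁆ * k * u + ⁅k, c⁆ * k * u + ⁅k, c⁆ * k * u + ⁅k, c⁆ * k * u) +
      (u * k * ⁅k, c⁆ + u * k * ⁅k, c⁆ + u * k * ⁅k, c⁆ + u * k * ⁅k, c⁆) +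
      t * k * ⁅k, ⁅k, c⁆⁆ + ⁅k, ⁅k, c⁆⁆ * k * t +
      (c * k * c + c * k * c + c * k * c + c * k * c + c * k * c + c * k * c) := by
    rw [hcdef, hu]
    simp only [Ring.lie_def]
    noncomm_ring
  have e2 := h3 (t * k * u + u * k * t) hskew2
  rw [id2, hd] at e2
  simp only [lie_zero, Ring.lie_def, sub_self, zero_mul, mul_zero, zero_add, add_zero] at e2
  have e2' : c * k * c = 0 := by
    apply aux_smul_cancel (3 : R)
    apply aux_smul_cancel (2 : R)
    have hm : (2 : R) • ((3 : R) • (c * k * c)) =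
        c * k * c + c * k * c + c * k * c + c * k * c + c * k * c + c * k * c := by
      module
    rw [hm]; exact e2
  have eq2 : c * c * k = 0 := by
    rw [mul_assoc, hc k, ← mul_assoc]; exact e2'
  have eq3 : c * c = c * k * u + c * k * u := by
    nth_rewrite 2 [hcu]
    rw [mul_sub, ← mul_assoc, ← mul_assoc, eq1]
    abel
  have hccc : c * c * c = 0 := by
    have h5 : c * k * u * c = c * c * k * u := by
      rw [mul_assoc (c * k) u c, ← hc u, ← mul_assoc (c * k) c u,
        mul_assoc c k c, ← hc k, ← mul_assoc c c k]
    rw [eq3, add_mul, h5, eq2, zero_mul, add_zero]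
  have hcc0 : c * c = 0 := by
    apply aux_central_zero hsemi (c * c)
    · intro x
      rw [mul_assoc c c x, hc x, ← mul_assoc, hc x, mul_assoc]
    · left; rw [star_mul, hcs, neg_mul, mul_neg, neg_neg]
    · rw [← mul_assoc, hccc, zero_mul]
  exact aux_central_zero hsemi c hc (Or.inr hcs) hcc0
end
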